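/- arXiv:2303.16419 — 2 statements merged into one kernel-verified Lean document; each statement's English description precedes it below -/
import Mathlib

section
/- The forgetful functor W from the category Q^{T̂,κ}_• of globular contracted T̂-collections over • to the category Q^{T̂}_• of globular T̂-collections over •, which forgets the contraction, is finitary, has a left adjoint, and the resulting adjunction is monadic. -/
open CategoryTheory CategoryTheory.Limits

/-- A globular ω-set: a sequence of sets with source and target maps satisfying
the globularity conditions. -/
structure GlobSet : Type 1 where
  cells : ℕ → Type
  src : ∀ n, cells (n + 1) → cells n
  tgt : ∀ n, cells (n + 1) → cells n
  glob_ss : ∀ n (x : cells (n + 2)), src n (src (n + 1) x) = src n (tgt (n + 1) x)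
  glob_tt : ∀ n (x : cells (n + 2)), tgt n (src (n + 1) x) = tgt n (tgt (n + 1) x)

/-- A (covariant) morphism of globular ω-sets. -/
structure GlobHom (Q R : GlobSet) : Type where
  app : ∀ n, Q.cells n → R.cells n
  app_src : ∀ n x, R.src n (app (n + 1) x) = app n (Q.src n x)
  app_tgt : ∀ n x, R.tgt n (app (n + 1) x) = app n (Q.tgt n x)

theorem GlobHom.hext {Q R : GlobSet} {f g : GlobHom Q R}
    (h : ∀ n x, f.app n x = g.app n x) : f = g := by
  obtain ⟨fa, _, _⟩ := f
  obtain ⟨ga, _, _⟩ := g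
  have : fa = ga := funext fun n => funext fun x => h n x
  subst this
  rfl

/-- The category `Qf` of globular ω-sets. -/
instance : Category GlobSet where
  Hom := GlobHom
  id Q := ⟨fun _ x => x, fun _ _ => rfl, fun _ _ => rfl⟩
  comp f g := ⟨fun n x => g.app n (f.app n x),
    fun n x => by rw [g.app_src, f.app_src],
    fun n x => by rw [g.app_tgt, f.app_tgt]⟩
  id_comp f := GlobHom.hext fun _ _ => rfl
  comp_id f := GlobHom.hext fun _ _ => rfl
  assoc f g h := GlobHom.hext fun _ _ => rfl

@[simp] theorem GlobHom.comp_app {Q R S : GlobSet} (f : Q ⟶ R) (g : R ⟶ S) (n x) :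
    (f ≫ g).app n x = g.app n (f.app n x) := rfl

@[simp] theorem GlobHom.id_app (Q : GlobSet) (n x) : (𝟙 Q : Q ⟶ Q).app n x = x := rfl

theorem GlobHom.congr_app {Q R : GlobSet} {f g : Q ⟶ R} (h : f = g) (n x) :
    f.app n x = g.app n x := by rw [h]

/-- Parallel cells in a globular ω-set. -/
def GlobSet.Parallel (Q : GlobSet) : ∀ n, Q.cells n → Q.cells n → Prop
  | 0, _, _ => True
  | n + 1, x, y => Q.src n x = Q.src n y ∧ Q.tgt n x = Q.tgt n y

theorem GlobHom.parallel_map {Q R : GlobSet} (φ : Q ⟶ R) :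
    ∀ {n} {x y : Q.cells n}, Q.Parallel n x y → R.Parallel n (φ.app n x) (φ.app n y) := by
  intro n x y h
  cases n with
  | zero => trivial
  | succ n =>
    exact ⟨by rw [φ.app_src, φ.app_src, h.1], by rw [φ.app_tgt, φ.app_tgt, h.2]⟩

/-- A (Leinster) contraction on a morphism `π : Q ⟶ R` of globular ω-sets. -/
structure Contraction {Q R : GlobSet} (π : Q ⟶ R) where
  κ : ∀ n (xp xm : Q.cells n) (y : R.cells (n + 1)),
      Q.Parallel n xp xm → R.src n y = π.app n xm → R.tgt n y = π.app n xp → Q.cells (n + 1)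
  κ_src : ∀ n xp xm y hp hs ht, Q.src n (κ n xp xm y hp hs ht) = xm
  κ_tgt : ∀ n xp xm y hp hs ht, Q.tgt n (κ n xp xm y hp hs ht) = xp
  κ_π : ∀ n xp xm y hp hs ht, π.app (n + 1) (κ n xp xm y hp hs ht) = y

/-- A terminal globular ω-set `•`. -/
def GlobSet.pt : GlobSet where
  cells _ := PUnit
  src _ _ := PUnit.unit
  tgt _ _ := PUnit.unit
  glob_ss _ _ := rfl
  glob_tt _ _ := rfl

/-- The terminal morphism to `•`. -/
def GlobSet.toPt (Q : GlobSet) : Q ⟶ GlobSet.pt :=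
  ⟨fun _ _ => PUnit.unit, fun _ _ => rfl, fun _ _ => rfl⟩

theorem GlobSet.hom_pt_ext {Q : GlobSet} (f g : Q ⟶ GlobSet.pt) : f = g :=
  GlobHom.hext fun _ _ => rfl

/-- The empty globular ω-set. -/
def GlobSet.empty : GlobSet where
  cells _ := PEmpty
  src _ x := x.elim
  tgt _ x := x.elim
  glob_ss _ x := x.elim
  glob_tt _ x := x.elim

/-- The levelwise fibered product of a cospan of globular ω-sets. -/
def GlobSet.pb {Q R X : GlobSet} (φ : Q ⟶ X) (ψ : R ⟶ X) : GlobSet where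
  cells n := { p : Q.cells n × R.cells n // φ.app n p.1 = ψ.app n p.2 }
  src n x := ⟨(Q.src n x.1.1, R.src n x.1.2), by rw [← φ.app_src, ← ψ.app_src, x.2]⟩
  tgt n x := ⟨(Q.tgt n x.1.1, R.tgt n x.1.2), by rw [← φ.app_tgt, ← ψ.app_tgt, x.2]⟩
  glob_ss n x := Subtype.ext (by
    show (Q.src n (Q.src (n+1) x.1.1), R.src n (R.src (n+1) x.1.2))
        = (Q.src n (Q.tgt (n+1) x.1.1), R.src n (R.tgt (n+1) x.1.2))
    rw [Q.glob_ss, R.glob_ss])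
  glob_tt n x := Subtype.ext (by
    show (Q.tgt n (Q.src (n+1) x.1.1), R.tgt n (R.src (n+1) x.1.2))
        = (Q.tgt n (Q.tgt (n+1) x.1.1), R.tgt n (R.tgt (n+1) x.1.2))
    rw [Q.glob_tt, R.glob_tt])

/-- First projection of the levelwise fibered product. -/
def GlobSet.pbFst {Q R X : GlobSet} (φ : Q ⟶ X) (ψ : R ⟶ X) : GlobSet.pb φ ψ ⟶ Q :=
  ⟨fun _ x => x.1.1, fun _ _ => rfl, fun _ _ => rfl⟩

/-- Second projection of the levelwise fibered product. -/
def GlobSet.pbSnd {Q R X : GlobSet} (φ : Q ⟶ X) (ψ : R ⟶ X) : GlobSet.pb φ ψ ⟶ R :=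
  ⟨fun _ x => x.1.2, fun _ _ => rfl, fun _ _ => rfl⟩
/-- Iterated source map. -/
def GlobSet.srcIter (Q : GlobSet) : ∀ (k : ℕ) {n : ℕ}, Q.cells (n + k) → Q.cells n
  | 0, _, x => x
  | k + 1, n, x => Q.srcIter k (Q.src (n + k) x)

/-- Iterated target map. -/
def GlobSet.tgtIter (Q : GlobSet) : ∀ (k : ℕ) {n : ℕ}, Q.cells (n + k) → Q.cells n
  | 0, _, x => x
  | k + 1, n, x => Q.tgtIter k (Q.tgt (n + k) x)

/-- Iterated identity map. -/
def iterId (cells : ℕ → Type) (id' : ∀ n, cells n → cells (n + 1)) :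
    ∀ (k : ℕ) {n : ℕ}, cells n → cells (n + k)
  | 0, _, x => x
  | k + 1, n, x => id' (n + k) (iterId cells id' k x)

/-- Transport of cells along an equality of levels. -/
def GlobSet.castCell (Q : GlobSet) {m m' : ℕ} (h : m = m') : Q.cells m → Q.cells m' :=
  fun x => h ▸ x

theorem GlobHom.app_srcIter {Q R : GlobSet} (φ : GlobHom Q R) (k : ℕ) :
    ∀ {n : ℕ} (x : Q.cells (n + k)), φ.app n (Q.srcIter k x) = R.srcIter k (φ.app (n + k) x) := by
  induction k with
  | zero => intro n x; rfl
  | succ k ih =>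
    intro n x
    show φ.app n (Q.srcIter k (Q.src (n + k) x)) = R.srcIter k (R.src (n + k) (φ.app (n + k + 1) x))
    rw [ih, ← φ.app_src]

theorem GlobHom.app_tgtIter {Q R : GlobSet} (φ : GlobHom Q R) (k : ℕ) :
    ∀ {n : ℕ} (x : Q.cells (n + k)), φ.app n (Q.tgtIter k x) = R.tgtIter k (φ.app (n + k) x) := by
  induction k with
  | zero => intro n x; rfl
  | succ k ih =>
    intro n x
    show φ.app n (Q.tgtIter k (Q.tgt (n + k) x)) = R.tgtIter k (R.tgt (n + k) (φ.app (n + k + 1) x))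
    rw [ih, ← φ.app_tgt]

/-- A strict globular ω-category: a globular ω-set with identities `id'` and partial
compositions `comp p k` (composition `∘^m_p` with `m = p + (k+1)`) satisfying compatibility
with sources/targets, associativity, unitality, functoriality of identities and binary
exchange.  In `comp p k x' x h` the pair `(x', x)` satisfies the composability condition
`h : srcIter x' = tgtIter x` (i.e. the iterated `p`-source of `x'` equals the iterated
`p`-target of `x`), and the composite means `x' ∘^m_p x`. -/
structure StrictOmegaCat extends GlobSet where
  id' : ∀ n, toGlobSet.cells n → toGlobSet.cells (n + 1)
  id_src : ∀ n x, toGlobSet.src n (id' n x) = x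
  id_tgt : ∀ n x, toGlobSet.tgt n (id' n x) = x
  comp : ∀ (p k : ℕ) (x' x : toGlobSet.cells (p + (k + 1))),
      toGlobSet.srcIter (k + 1) x' = toGlobSet.tgtIter (k + 1) x → toGlobSet.cells (p + (k + 1))
  comp_src_zero : ∀ p (x' x : toGlobSet.cells (p + 1))
      (h : toGlobSet.srcIter 1 x' = toGlobSet.tgtIter 1 x),
      toGlobSet.src p (comp p 0 x' x h) = toGlobSet.src p x
  comp_tgt_zero : ∀ p (x' x : toGlobSet.cells (p + 1))
      (h : toGlobSet.srcIter 1 x' = toGlobSet.tgtIter 1 x),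
      toGlobSet.tgt p (comp p 0 x' x h) = toGlobSet.tgt p x'
  comp_src_succ : ∀ p k (x' x : toGlobSet.cells (p + (k + 2)))
      (h : toGlobSet.srcIter (k + 2) x' = toGlobSet.tgtIter (k + 2) x)
      (h' : toGlobSet.srcIter (k + 1) (toGlobSet.src (p + (k + 1)) x')
          = toGlobSet.tgtIter (k + 1) (toGlobSet.src (p + (k + 1)) x)),
      toGlobSet.src (p + (k + 1)) (comp p (k + 1) x' x h)
        = comp p k (toGlobSet.src (p + (k + 1)) x') (toGlobSet.src (p + (k + 1)) x) h'
  comp_tgt_succ : ∀ p k (x' x : toGlobSet.cells (p + (k + 2)))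
      (h : toGlobSet.srcIter (k + 2) x' = toGlobSet.tgtIter (k + 2) x)
      (h' : toGlobSet.srcIter (k + 1) (toGlobSet.tgt (p + (k + 1)) x')
          = toGlobSet.tgtIter (k + 1) (toGlobSet.tgt (p + (k + 1)) x)),
      toGlobSet.tgt (p + (k + 1)) (comp p (k + 1) x' x h)
        = comp p k (toGlobSet.tgt (p + (k + 1)) x') (toGlobSet.tgt (p + (k + 1)) x) h'
  comp_assoc : ∀ p k (z y x : toGlobSet.cells (p + (k + 1)))
      (hzy : toGlobSet.srcIter (k + 1) z = toGlobSet.tgtIter (k + 1) y)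
      (hyx : toGlobSet.srcIter (k + 1) y = toGlobSet.tgtIter (k + 1) x)
      (hl : toGlobSet.srcIter (k + 1) (comp p k z y hzy) = toGlobSet.tgtIter (k + 1) x)
      (hr : toGlobSet.srcIter (k + 1) z = toGlobSet.tgtIter (k + 1) (comp p k y x hyx)),
      comp p k (comp p k z y hzy) x hl = comp p k z (comp p k y x hyx) hr
  comp_unit_left : ∀ p k (x : toGlobSet.cells (p + (k + 1)))
      (h : toGlobSet.srcIter (k + 1)
            (iterId toGlobSet.cells id' (k + 1) (toGlobSet.tgtIter (k + 1) x))
          = toGlobSet.tgtIter (k + 1) x),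
      comp p k (iterId toGlobSet.cells id' (k + 1) (toGlobSet.tgtIter (k + 1) x)) x h = x
  comp_unit_right : ∀ p k (x : toGlobSet.cells (p + (k + 1)))
      (h : toGlobSet.srcIter (k + 1) x
          = toGlobSet.tgtIter (k + 1)
              (iterId toGlobSet.cells id' (k + 1) (toGlobSet.srcIter (k + 1) x))),
      comp p k x (iterId toGlobSet.cells id' (k + 1) (toGlobSet.srcIter (k + 1) x)) h = x
  id_comp' : ∀ p k (x' x : toGlobSet.cells (p + (k + 1)))
      (h : toGlobSet.srcIter (k + 1) x' = toGlobSet.tgtIter (k + 1) x)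
      (h' : toGlobSet.srcIter (k + 2) (id' (p + (k + 1)) x')
          = toGlobSet.tgtIter (k + 2) (id' (p + (k + 1)) x)),
      id' (p + (k + 1)) (comp p k x' x h)
        = comp p (k + 1) (id' (p + (k + 1)) x') (id' (p + (k + 1)) x) h'
  exchange : ∀ (q d k j : ℕ) (he : (q + (d + 1)) + (k + 1) = q + (j + 1))
      (y' y x' x : toGlobSet.cells ((q + (d + 1)) + (k + 1)))
      (h₁ : toGlobSet.srcIter (k + 1) y' = toGlobSet.tgtIter (k + 1) y)
      (h₂ : toGlobSet.srcIter (k + 1) x' = toGlobSet.tgtIter (k + 1) x)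
      (h₃ : toGlobSet.srcIter (j + 1) (toGlobSet.castCell he (comp (q + (d + 1)) k y' y h₁))
          = toGlobSet.tgtIter (j + 1) (toGlobSet.castCell he (comp (q + (d + 1)) k x' x h₂)))
      (h₄ : toGlobSet.srcIter (j + 1) (toGlobSet.castCell he y')
          = toGlobSet.tgtIter (j + 1) (toGlobSet.castCell he x'))
      (h₅ : toGlobSet.srcIter (j + 1) (toGlobSet.castCell he y)
          = toGlobSet.tgtIter (j + 1) (toGlobSet.castCell he x))
      (h₆ : toGlobSet.srcIter (k + 1)
              (toGlobSet.castCell he.symm (comp q j (toGlobSet.castCell he y') (toGlobSet.castCell he x') h₄))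
          = toGlobSet.tgtIter (k + 1)
              (toGlobSet.castCell he.symm (comp q j (toGlobSet.castCell he y) (toGlobSet.castCell he x) h₅))),
      comp q j (toGlobSet.castCell he (comp (q + (d + 1)) k y' y h₁))
          (toGlobSet.castCell he (comp (q + (d + 1)) k x' x h₂)) h₃
        = toGlobSet.castCell he (comp (q + (d + 1)) k
            (toGlobSet.castCell he.symm (comp q j (toGlobSet.castCell he y') (toGlobSet.castCell he x') h₄))
            (toGlobSet.castCell he.symm (comp q j (toGlobSet.castCell he y) (toGlobSet.castCell he x) h₅)) h₆)

/-- An ω-functor between strict globular ω-categories. -/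
structure StrictFunctor (C D : StrictOmegaCat) where
  toGlobHom : C.toGlobSet ⟶ D.toGlobSet
  map_id : ∀ n x, toGlobHom.app (n + 1) (C.id' n x) = D.id' n (toGlobHom.app n x)
  map_comp : ∀ p k (x' x : C.toGlobSet.cells (p + (k + 1)))
      (h : C.toGlobSet.srcIter (k + 1) x' = C.toGlobSet.tgtIter (k + 1) x)
      (h' : D.toGlobSet.srcIter (k + 1) (toGlobHom.app (p + (k + 1)) x')
          = D.toGlobSet.tgtIter (k + 1) (toGlobHom.app (p + (k + 1)) x)),
      toGlobHom.app (p + (k + 1)) (C.comp p k x' x h)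
        = D.comp p k (toGlobHom.app (p + (k + 1)) x') (toGlobHom.app (p + (k + 1)) x) h'

theorem StrictFunctor.hext {C D : StrictOmegaCat} {F G : StrictFunctor C D}
    (h : F.toGlobHom = G.toGlobHom) : F = G := by
  cases F; cases G; cases h; rfl

/-- The category `Cf` of strict globular ω-categories. -/
instance : CategoryStruct StrictOmegaCat where
  Hom := StrictFunctor
  id C := { toGlobHom := 𝟙 C.toGlobSet, map_id := fun _ _ => rfl,
            map_comp := fun _ _ _ _ _ _ => rfl }
  comp {C D E} F G :=
    { toGlobHom := F.toGlobHom ≫ G.toGlobHom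
      map_id := fun n x => by
        show G.toGlobHom.app (n + 1) (F.toGlobHom.app (n + 1) (C.id' n x))
          = E.id' n (G.toGlobHom.app n (F.toGlobHom.app n x))
        rw [F.map_id, G.map_id]
      map_comp := fun p k x' x h h' => by
        have hD : D.toGlobSet.srcIter (k + 1) (F.toGlobHom.app (p + (k + 1)) x')
            = D.toGlobSet.tgtIter (k + 1) (F.toGlobHom.app (p + (k + 1)) x) := by
          rw [← GlobHom.app_srcIter, ← GlobHom.app_tgtIter, h]
        show G.toGlobHom.app (p + (k + 1)) (F.toGlobHom.app (p + (k + 1)) (C.comp p k x' x h))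
          = E.comp p k (G.toGlobHom.app (p + (k + 1)) (F.toGlobHom.app (p + (k + 1)) x'))
              (G.toGlobHom.app (p + (k + 1)) (F.toGlobHom.app (p + (k + 1)) x)) h'
        rw [F.map_comp p k x' x h hD, G.map_comp p k _ _ hD] }

instance : Category StrictOmegaCat where
  id_comp F := StrictFunctor.hext (by
    show 𝟙 _ ≫ F.toGlobHom = F.toGlobHom
    simp)
  comp_id F := StrictFunctor.hext (by
    show F.toGlobHom ≫ 𝟙 _ = F.toGlobHom
    simp)
  assoc F G H := StrictFunctor.hext (by
    show (F.toGlobHom ≫ G.toGlobHom) ≫ H.toGlobHom = F.toGlobHom ≫ (G.toGlobHom ≫ H.toGlobHom)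
    simp)

/-- The forgetful functor `U : Cf ⥤ Qf`. -/
def forgetStrict : StrictOmegaCat ⥤ GlobSet where
  obj C := C.toGlobSet
  map F := F.toGlobHom
  map_id _ := rfl
  map_comp _ _ := rfl
/-- A fully involutive strict globular ω-category: a strict globular ω-category equipped,
for each `q : ℕ`, with grade-preserving involutions `inv q` that swap `q`-sources and
`q`-targets, commute with the other sources/targets, reverse `∘^k_q` and preserve the
other compositions, preserve identities, are involutive, commute pairwise, and act as
the identity on cells of dimension `≤ q`. -/
structure StarOmegaCat extends StrictOmegaCat where
  inv : ∀ (q n : ℕ), toGlobSet.cells n → toGlobSet.cells n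
  inv_src_self : ∀ q (x : toGlobSet.cells (q + 1)),
      inv q q (toGlobSet.src q x) = toGlobSet.tgt q (inv q (q + 1) x)
  inv_tgt_self : ∀ q (x : toGlobSet.cells (q + 1)),
      inv q q (toGlobSet.tgt q x) = toGlobSet.src q (inv q (q + 1) x)
  inv_src_ne : ∀ q p, p ≠ q → ∀ (x : toGlobSet.cells (p + 1)),
      inv q p (toGlobSet.src p x) = toGlobSet.src p (inv q (p + 1) x)
  inv_tgt_ne : ∀ q p, p ≠ q → ∀ (x : toGlobSet.cells (p + 1)),
      inv q p (toGlobSet.tgt p x) = toGlobSet.tgt p (inv q (p + 1) x)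
  inv_comp_self : ∀ p k (x' x : toGlobSet.cells (p + (k + 1)))
      (h : toGlobSet.srcIter (k + 1) x' = toGlobSet.tgtIter (k + 1) x)
      (h' : toGlobSet.srcIter (k + 1) (inv p (p + (k + 1)) x)
          = toGlobSet.tgtIter (k + 1) (inv p (p + (k + 1)) x')),
      inv p (p + (k + 1)) (comp p k x' x h)
        = comp p k (inv p (p + (k + 1)) x) (inv p (p + (k + 1)) x') h'
  inv_comp_ne : ∀ q p k, q ≠ p → ∀ (x' x : toGlobSet.cells (p + (k + 1)))
      (h : toGlobSet.srcIter (k + 1) x' = toGlobSet.tgtIter (k + 1) x)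
      (h' : toGlobSet.srcIter (k + 1) (inv q (p + (k + 1)) x')
          = toGlobSet.tgtIter (k + 1) (inv q (p + (k + 1)) x)),
      inv q (p + (k + 1)) (comp p k x' x h)
        = comp p k (inv q (p + (k + 1)) x') (inv q (p + (k + 1)) x) h'
  inv_id : ∀ q n x, inv q (n + 1) (id' n x) = id' n (inv q n x)
  inv_inv : ∀ q n x, inv q n (inv q n x) = x
  inv_comm : ∀ q p n x, inv q n (inv p n x) = inv p n (inv q n x)
  inv_ground : ∀ q n, n ≤ q → ∀ x, inv q n x = x

/-- An involutive ω-functor between fully involutive strict globular ω-categories. -/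
structure StarFunctor (C D : StarOmegaCat) where
  toF : C.toStrictOmegaCat ⟶ D.toStrictOmegaCat
  map_inv : ∀ q n x, toF.toGlobHom.app n (C.inv q n x) = D.inv q n (toF.toGlobHom.app n x)

theorem StarFunctor.hext {C D : StarOmegaCat} {F G : StarFunctor C D}
    (h : F.toF = G.toF) : F = G := by
  cases F; cases G; cases h; rfl

/-- The category `Cf*` of fully involutive strict globular ω-categories. -/
instance : CategoryStruct StarOmegaCat where
  Hom := StarFunctor
  id C := { toF := 𝟙 C.toStrictOmegaCat, map_inv := fun _ _ _ => rfl }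
  comp {C D E} F G :=
    { toF := F.toF ≫ G.toF
      map_inv := fun q n x => by
        show G.toF.toGlobHom.app n (F.toF.toGlobHom.app n (C.inv q n x))
          = E.inv q n (G.toF.toGlobHom.app n (F.toF.toGlobHom.app n x))
        rw [F.map_inv, G.map_inv] }

instance : Category StarOmegaCat where
  id_comp F := StarFunctor.hext (by
    show 𝟙 _ ≫ F.toF = F.toF
    simp)
  comp_id F := StarFunctor.hext (by
    show F.toF ≫ 𝟙 _ = F.toF
    simp)
  assoc F G H := StarFunctor.hext (by
    show (F.toF ≫ G.toF) ≫ H.toF = F.toF ≫ (G.toF ≫ H.toF)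
    simp)

/-- The forgetful functor `U* : Cf* ⥤ Qf`. -/
def forgetStar : StarOmegaCat ⥤ GlobSet where
  obj C := C.toStrictOmegaCat.toGlobSet
  map F := F.toF.toGlobHom
  map_id _ := rfl
  map_comp _ _ := rfl
/-! ### Globular `T`-collections, contracted collections, operadic magmas and operads
over a monad `T` on the category of globular ω-sets, relative to the terminal globular
ω-set `GlobSet.pt`. -/

/-- A globular `T`-collection over `•`. -/
structure Coll (T : Monad GlobSet) : Type 1 where
  Q : GlobSet
  π : Q ⟶ T.toFunctor.obj GlobSet.pt

/-- A morphism of globular `T`-collections over `•`. -/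
structure CollHom {T : Monad GlobSet} (X Y : Coll T) : Type where
  hom : X.Q ⟶ Y.Q
  hom_π : hom ≫ Y.π = X.π

theorem CollHom.hext {T : Monad GlobSet} {X Y : Coll T} {f g : CollHom X Y}
    (h : f.hom = g.hom) : f = g := by
  cases f; cases g; cases h; rfl

/-- Composite of morphisms of `T`-collections. -/
def CollHom.comp {T : Monad GlobSet} {X Y Z : Coll T} (f : CollHom X Y) (g : CollHom Y Z) :
    CollHom X Z where
  hom := f.hom ≫ g.hom
  hom_π := by rw [Category.assoc, g.hom_π, f.hom_π]

/-- Identity morphism of a `T`-collection. -/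
def CollHom.idc {T : Monad GlobSet} (X : Coll T) : CollHom X X where
  hom := 𝟙 X.Q
  hom_π := by simp

instance {T : Monad GlobSet} : Category (Coll T) where
  Hom := CollHom
  id := CollHom.idc
  comp := CollHom.comp
  id_comp f := CollHom.hext (by
    show 𝟙 _ ≫ f.hom = f.hom
    simp)
  comp_id f := CollHom.hext (by
    show f.hom ≫ 𝟙 _ = f.hom
    simp)
  assoc f g h := CollHom.hext (by
    show (f.hom ≫ g.hom) ≫ h.hom = f.hom ≫ (g.hom ≫ h.hom)
    simp)

/-- In the bicategory of `T`-spans, the apex of the composite 1-cell `Q ∘ Q` of a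
`T`-collection with itself: the pullback `Q ×_{T(•)} T(Q)`. -/
def Coll.apex {T : Monad GlobSet} (X : Coll T) : GlobSet :=
  GlobSet.pb X.π (T.toFunctor.map (GlobSet.toPt X.Q))

/-- The projection of the composite 1-cell `Q ∘ Q` to `T(•)`. -/
def Coll.compProj {T : Monad GlobSet} (X : Coll T) : X.apex ⟶ T.toFunctor.obj GlobSet.pt :=
  GlobSet.pbSnd X.π (T.toFunctor.map (GlobSet.toPt X.Q)) ≫ T.toFunctor.map X.π
    ≫ T.μ.app GlobSet.pt

/-- A globular contracted `T`-collection over `•`. -/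
structure CColl (T : Monad GlobSet) extends Coll T where
  contr : Contraction toColl.π

/-- A morphism of globular contracted `T`-collections over `•`. -/
structure CCollHom {T : Monad GlobSet} (X Y : CColl T) : Type where
  hom : X.toColl.Q ⟶ Y.toColl.Q
  hom_π : hom ≫ Y.toColl.π = X.toColl.π
  hom_contr : ∀ n xp xm y hp hs ht hp' hs' ht',
      hom.app (n + 1) (X.contr.κ n xp xm y hp hs ht)
        = Y.contr.κ n (hom.app n xp) (hom.app n xm) y hp' hs' ht'

theorem CCollHom.hext {T : Monad GlobSet} {X Y : CColl T} {f g : CCollHom X Y}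
    (h : f.hom = g.hom) : f = g := by
  cases f; cases g; cases h; rfl

instance {T : Monad GlobSet} : Category (CColl T) where
  Hom := CCollHom
  id X :=
    { hom := 𝟙 X.toColl.Q
      hom_π := by simp
      hom_contr := fun n xp xm y hp hs ht hp' hs' ht' => rfl }
  comp {X Y Z} f g :=
    { hom := f.hom ≫ g.hom
      hom_π := by rw [Category.assoc, g.hom_π, f.hom_π]
      hom_contr := fun n xp xm y hp hs ht hp' hs' ht' => by
        have hpY : Y.toColl.Q.Parallel n (f.hom.app n xp) (f.hom.app n xm) :=
          GlobHom.parallel_map f.hom hp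
        have hsY : (T.toFunctor.obj GlobSet.pt).src n y = Y.toColl.π.app n (f.hom.app n xm) := by
          rw [hs, ← f.hom_π]; rfl
        have htY : (T.toFunctor.obj GlobSet.pt).tgt n y = Y.toColl.π.app n (f.hom.app n xp) := by
          rw [ht, ← f.hom_π]; rfl
        have hpZ : Z.toColl.Q.Parallel n (g.hom.app n (f.hom.app n xp))
            (g.hom.app n (f.hom.app n xm)) := GlobHom.parallel_map g.hom hpY
        have hsZ : (T.toFunctor.obj GlobSet.pt).src n y
            = Z.toColl.π.app n (g.hom.app n (f.hom.app n xm)) := by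
          rw [hsY, ← g.hom_π]; rfl
        have htZ : (T.toFunctor.obj GlobSet.pt).tgt n y
            = Z.toColl.π.app n (g.hom.app n (f.hom.app n xp)) := by
          rw [htY, ← g.hom_π]; rfl
        show g.hom.app (n + 1) (f.hom.app (n + 1) (X.contr.κ n xp xm y hp hs ht)) = _
        rw [f.hom_contr n xp xm y hp hs ht hpY hsY htY,
          g.hom_contr n _ _ y hpY hsY htY hpZ hsZ htZ]
        rfl }
  id_comp f := CCollHom.hext (by
    show 𝟙 _ ≫ f.hom = f.hom
    simp)
  comp_id f := CCollHom.hext (by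
    show f.hom ≫ 𝟙 _ = f.hom
    simp)
  assoc f g h := CCollHom.hext (by
    show (f.hom ≫ g.hom) ≫ h.hom = f.hom ≫ (g.hom ≫ h.hom)
    simp)

/-- The forgetful functor `W` from globular contracted `T`-collections to globular
`T`-collections, forgetting the contraction. -/
def forgetCColl (T : Monad GlobSet) : CColl T ⥤ Coll T where
  obj X := X.toColl
  map f := ⟨f.hom, f.hom_π⟩
  map_id _ := CollHom.hext rfl
  map_comp _ _ := CollHom.hext rfl

/-- A globular contracted `T`-operadic magma over `•`: a contracted `T`-collection
with a unit 2-cell `e` (over the unit of `T`) and a multiplication 2-cell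
`m : Q ∘ Q ⟶ Q` (over the multiplication of `T`), not required to satisfy any
associativity or unitality axioms. -/
structure CMagma (T : Monad GlobSet) extends CColl T where
  e : GlobSet.pt ⟶ toColl.Q
  e_π : e ≫ toColl.π = T.η.app GlobSet.pt
  m : toColl.apex ⟶ toColl.Q
  m_π : m ≫ toColl.π = toColl.compProj

/-- The underlying collection of a contracted `T`-operadic magma. -/
abbrev CMagma.coll {T : Monad GlobSet} (M : CMagma T) : Coll T := M.toCColl.toColl

/-- A morphism of globular contracted `T`-operadic magmas: a morphism of `T`-collections
commuting with units, multiplications and contractions. -/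
structure CMagmaHom {T : Monad GlobSet} (M N : CMagma T) : Type where
  hom : M.coll.Q ⟶ N.coll.Q
  hom_π : hom ≫ N.coll.π = M.coll.π
  hom_e : M.e ≫ hom = N.e
  hom_contr : ∀ n xp xm y hp hs ht hp' hs' ht',
      hom.app (n + 1) (M.contr.κ n xp xm y hp hs ht)
        = N.contr.κ n (hom.app n xp) (hom.app n xm) y hp' hs' ht'
  hom_m : ∀ n (q : M.coll.Q.cells n) (z : (T.toFunctor.obj M.coll.Q).cells n)
      (hqz : M.coll.π.app n q = (T.toFunctor.map (GlobSet.toPt M.coll.Q)).app n z)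
      (hqz' : N.coll.π.app n (hom.app n q)
        = (T.toFunctor.map (GlobSet.toPt N.coll.Q)).app n ((T.toFunctor.map hom).app n z)),
      hom.app n (M.m.app n ⟨(q, z), hqz⟩)
        = N.m.app n ⟨(hom.app n q, (T.toFunctor.map hom).app n z), hqz'⟩

theorem CMagmaHom.hext {T : Monad GlobSet} {M N : CMagma T} {f g : CMagmaHom M N}
    (h : f.hom = g.hom) : f = g := by
  cases f; cases g; cases h; rfl

/-- The underlying collection morphism of a morphism of contracted `T`-operadic magmas. -/
def CMagmaHom.toCollHom {T : Monad GlobSet} {M N : CMagma T} (f : CMagmaHom M N) :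
    CollHom M.coll N.coll := ⟨f.hom, f.hom_π⟩

section MagmaCat
variable {T : Monad GlobSet}

theorem coll_pt_natural {M N : CMagma T} (f : CMagmaHom M N) (n : ℕ)
    (z : (T.toFunctor.obj M.coll.Q).cells n) :
    (T.toFunctor.map (GlobSet.toPt N.coll.Q)).app n ((T.toFunctor.map f.hom).app n z)
      = (T.toFunctor.map (GlobSet.toPt M.coll.Q)).app n z := by
  have : T.toFunctor.map f.hom ≫ T.toFunctor.map (GlobSet.toPt N.coll.Q)
      = T.toFunctor.map (GlobSet.toPt M.coll.Q) := by
    rw [← CategoryTheory.Functor.map_comp]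
    exact congrArg T.toFunctor.map (GlobSet.hom_pt_ext _ _)
  exact GlobHom.congr_app this n z

def CMagmaHom.idm (M : CMagma T) : CMagmaHom M M where
  hom := 𝟙 M.coll.Q
  hom_π := by simp
  hom_e := by simp
  hom_contr := fun n xp xm y hp hs ht hp' hs' ht' => rfl
  hom_m := fun n q z hqz hqz' => by
    show M.m.app n ⟨(q, z), hqz⟩ = M.m.app n ⟨((𝟙 M.coll.Q : M.coll.Q ⟶ _).app n q,
      (T.toFunctor.map (𝟙 M.coll.Q)).app n z), hqz'⟩
    apply congrArg (M.m.app n)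
    apply Subtype.ext
    have hz : (T.toFunctor.map (𝟙 M.coll.Q)).app n z = z := by
      rw [CategoryTheory.Functor.map_id]; rfl
    show (q, z) = ((𝟙 M.coll.Q : M.coll.Q ⟶ _).app n q, (T.toFunctor.map (𝟙 M.coll.Q)).app n z)
    rw [hz]
    rfl

def CMagmaHom.compm {M N P : CMagma T} (f : CMagmaHom M N) (g : CMagmaHom N P) :
    CMagmaHom M P where
  hom := f.hom ≫ g.hom
  hom_π := by rw [Category.assoc, g.hom_π, f.hom_π]
  hom_e := by rw [← Category.assoc, f.hom_e, g.hom_e]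
  hom_contr := fun n xp xm y hp hs ht hp' hs' ht' => by
    have hpY : N.coll.Q.Parallel n (f.hom.app n xp) (f.hom.app n xm) :=
      GlobHom.parallel_map f.hom hp
    have hsY : (T.toFunctor.obj GlobSet.pt).src n y = N.coll.π.app n (f.hom.app n xm) := by
      rw [hs, ← f.hom_π]; rfl
    have htY : (T.toFunctor.obj GlobSet.pt).tgt n y = N.coll.π.app n (f.hom.app n xp) := by
      rw [ht, ← f.hom_π]; rfl
    have hpZ : P.coll.Q.Parallel n (g.hom.app n (f.hom.app n xp))
        (g.hom.app n (f.hom.app n xm)) := GlobHom.parallel_map g.hom hpY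
    have hsZ : (T.toFunctor.obj GlobSet.pt).src n y
        = P.coll.π.app n (g.hom.app n (f.hom.app n xm)) := by
      rw [hsY, ← g.hom_π]; rfl
    have htZ : (T.toFunctor.obj GlobSet.pt).tgt n y
        = P.coll.π.app n (g.hom.app n (f.hom.app n xp)) := by
      rw [htY, ← g.hom_π]; rfl
    show g.hom.app (n + 1) (f.hom.app (n + 1) (M.contr.κ n xp xm y hp hs ht)) = _
    rw [f.hom_contr n xp xm y hp hs ht hpY hsY htY,
      g.hom_contr n _ _ y hpY hsY htY hpZ hsZ htZ]
    rfl
  hom_m := fun n q z hqz hqz' => by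
    have h₁ : N.coll.π.app n (f.hom.app n q)
        = (T.toFunctor.map (GlobSet.toPt N.coll.Q)).app n ((T.toFunctor.map f.hom).app n z) := by
      rw [coll_pt_natural f n z]
      have : N.coll.π.app n (f.hom.app n q) = M.coll.π.app n q := by
        rw [← f.hom_π]; rfl
      rw [this, hqz]
    have h₂ : P.coll.π.app n (g.hom.app n (f.hom.app n q))
        = (T.toFunctor.map (GlobSet.toPt P.coll.Q)).app n
            ((T.toFunctor.map g.hom).app n ((T.toFunctor.map f.hom).app n z)) := by
      rw [coll_pt_natural g n _]
      have : P.coll.π.app n (g.hom.app n (f.hom.app n q)) = N.coll.π.app n (f.hom.app n q) := by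
        rw [← g.hom_π]; rfl
      rw [this, h₁]
    show g.hom.app n (f.hom.app n (M.m.app n ⟨(q, z), hqz⟩)) = _
    rw [f.hom_m n q z hqz h₁, g.hom_m n _ _ h₁ h₂]
    apply congrArg (P.m.app n)
    apply Subtype.ext
    show ((g.hom.app n (f.hom.app n q)),
        (T.toFunctor.map g.hom).app n ((T.toFunctor.map f.hom).app n z)) = _
    have : (T.toFunctor.map g.hom).app n ((T.toFunctor.map f.hom).app n z)
        = (T.toFunctor.map (f.hom ≫ g.hom)).app n z := by
      rw [CategoryTheory.Functor.map_comp]; rfl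
    rw [this]
    rfl

instance : Category (CMagma T) where
  Hom := CMagmaHom
  id := CMagmaHom.idm
  comp := CMagmaHom.compm
  id_comp f := CMagmaHom.hext (by
    show 𝟙 _ ≫ f.hom = f.hom
    simp)
  comp_id f := CMagmaHom.hext (by
    show f.hom ≫ 𝟙 _ = f.hom
    simp)
  assoc f g h := CMagmaHom.hext (by
    show (f.hom ≫ g.hom) ≫ h.hom = f.hom ≫ (g.hom ≫ h.hom)
    simp)

end MagmaCat

/-- A globular contracted `T`-operad over `•`: a contracted `T`-operadic magma whose unit
and multiplication satisfy the (elementwise) monadic unitality and associativity axioms of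
a monad on `•` internal to the bicategory of `T`-spans. -/
structure COperad (T : Monad GlobSet) extends CMagma T where
  unit_right : ∀ n (q : toColl.Q.cells n)
      (h : toColl.π.app n q = (T.toFunctor.map (GlobSet.toPt toColl.Q)).app n
            ((T.toFunctor.map e).app n (toColl.π.app n q))),
      m.app n ⟨(q, (T.toFunctor.map e).app n (toColl.π.app n q)), h⟩ = q
  unit_left : ∀ n (q : toColl.Q.cells n)
      (h : toColl.π.app n (e.app n PUnit.unit)
          = (T.toFunctor.map (GlobSet.toPt toColl.Q)).app n ((T.η.app toColl.Q).app n q)),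
      m.app n ⟨(e.app n PUnit.unit, (T.η.app toColl.Q).app n q), h⟩ = q
  massoc : ∀ n (q : toColl.Q.cells n) (z w : (T.toFunctor.obj toColl.Q).cells n)
      (θ : (T.toFunctor.obj toColl.apex).cells n)
      (hz : (T.toFunctor.map (GlobSet.pbFst toColl.π
              (T.toFunctor.map (GlobSet.toPt toColl.Q)))).app n θ = z)
      (hw : (T.μ.app toColl.Q).app n
              ((T.toFunctor.map (GlobSet.pbSnd toColl.π
                (T.toFunctor.map (GlobSet.toPt toColl.Q)))).app n θ) = w)
      (h₁ : toColl.π.app n q = (T.toFunctor.map (GlobSet.toPt toColl.Q)).app n z)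
      (h₂ : toColl.π.app n (m.app n ⟨(q, z), h₁⟩)
          = (T.toFunctor.map (GlobSet.toPt toColl.Q)).app n w)
      (h₃ : toColl.π.app n q
          = (T.toFunctor.map (GlobSet.toPt toColl.Q)).app n ((T.toFunctor.map m).app n θ)),
      m.app n ⟨(m.app n ⟨(q, z), h₁⟩, w), h₂⟩ = m.app n ⟨(q, (T.toFunctor.map m).app n θ), h₃⟩

/-- Morphisms of globular contracted `T`-operads. -/
abbrev COperadHom {T : Monad GlobSet} (P P' : COperad T) := CMagmaHom P.toCMagma P'.toCMagma

instance {T : Monad GlobSet} : Category (COperad T) where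
  Hom P P' := COperadHom P P'
  id P := CMagmaHom.idm P.toCMagma
  comp := CMagmaHom.compm
  id_comp f := CMagmaHom.hext (by
    show 𝟙 _ ≫ f.hom = f.hom
    simp)
  comp_id f := CMagmaHom.hext (by
    show f.hom ≫ 𝟙 _ = f.hom
    simp)
  assoc f g h := CMagmaHom.hext (by
    show (f.hom ≫ g.hom) ≫ h.hom = f.hom ≫ (g.hom ≫ h.hom)
    simp)

/-- The forgetful functor from globular contracted `T`-operads to globular `T`-collections. -/
def forgetCOperad (T : Monad GlobSet) : COperad T ⥤ Coll T where
  obj P := P.toCMagma.coll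
  map f := f.toCollHom
  map_id _ := CollHom.hext rfl
  map_comp _ _ := CollHom.hext rfl

/-- The empty globular `T`-collection, which is initial among `T`-collections. -/
def emptyColl (T : Monad GlobSet) : Coll T where
  Q := GlobSet.empty
  π := ⟨fun _ x => x.elim, fun _ x => x.elim, fun _ x => x.elim⟩
/-! ### Cartesian functors, Cartesian natural transformations, finitary functors,
finitely presentable objects and locally finitely presentable categories. -/

universe w₁ w₂ u₁ u₂ v₁ v₂

/-- A functor is Cartesian if it preserves pullbacks. -/
def PreservesPB {C : Type u₁} [Category.{v₁} C] {D : Type u₂} [Category.{v₂} D]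
    (F : C ⥤ D) : Prop :=
  ∀ {P X Y Z : C} (fst : P ⟶ X) (snd : P ⟶ Y) (f : X ⟶ Z) (g : Y ⟶ Z),
    IsPullback fst snd f g → IsPullback (F.map fst) (F.map snd) (F.map f) (F.map g)

/-- A natural transformation is Cartesian if all its naturality squares are pullbacks. -/
def CartesianNT {C : Type u₁} [Category.{v₁} C] {D : Type u₂} [Category.{v₂} D]
    {F G : C ⥤ D} (α : F ⟶ G) : Prop :=
  ∀ {X Y : C} (f : X ⟶ Y), IsPullback (F.map f) (α.app X) (α.app Y) (G.map f)

/-- A functor is finitary if it preserves (small) filtered colimits. -/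
def Finitary {C : Type u₁} [Category.{v₁} C] {D : Type u₂} [Category.{v₂} D]
    (F : C ⥤ D) : Prop :=
  ∀ (J : Type) [SmallCategory J] [IsFiltered J], Nonempty (PreservesColimitsOfShape J F)

/-- An object is finitely presentable if its covariant Hom-functor is finitary. -/
def IsFinPres {C : Type u₁} [Category.{v₁} C] (X : C) : Prop :=
  Finitary (coyoneda.obj (Opposite.op X))

/-- A category is locally finitely presentable if it is cocomplete, its full subcategory
of finitely presentable objects is essentially small, and every object is a filtered
colimit of finitely presentable objects. -/
def IsLFP (C : Type u₁) [Category.{v₁} C] : Prop :=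
  HasColimitsOfSize.{0, 0} C ∧
  EssentiallySmall.{0} (ObjectProperty.FullSubcategory (IsFinPres (C := C))) ∧
  ∀ X : C, ∃ (J : Type) (_ : SmallCategory J), IsFiltered J ∧
    ∃ (D : J ⥤ C) (c : Cocone D),
      (∀ j, IsFinPres (D.obj j)) ∧ Nonempty (IsColimit c) ∧ c.pt = X

/-! ### Part B: the free contracted collection, giving a left adjoint to `forgetCColl`. -/

namespace FreeContr

variable {T : Monad GlobSet}

/-- Raw cells of the free contracted collection on a collection `X`. -/
inductive FCell (X : Coll T) : ℕ → Type
  | old {n} : X.Q.cells n → FCell X n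
  | kp {n} : FCell X n → FCell X n → (T.toFunctor.obj GlobSet.pt).cells (n + 1) → FCell X (n + 1)

variable {X : Coll T}

/-- Raw source. -/
def rawSrc : ∀ {n}, FCell X (n + 1) → FCell X n
  | _, .old x => .old (X.Q.src _ x)
  | _, .kp _ b _ => b

/-- Raw target. -/
def rawTgt : ∀ {n}, FCell X (n + 1) → FCell X n
  | _, .old x => .old (X.Q.tgt _ x)
  | _, .kp a _ _ => a

/-- Raw projection to `T(•)`. -/
def rawPi : ∀ {n}, FCell X n → (T.toFunctor.obj GlobSet.pt).cells n
  | _, .old x => X.π.app _ x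
  | _, .kp _ _ y => y

/-- Raw parallelism. -/
def rawPar : ∀ {n}, FCell X n → FCell X n → Prop
  | 0, _, _ => True
  | _ + 1, a, b => rawSrc a = rawSrc b ∧ rawTgt a = rawTgt b

/-- Well-formedness of raw cells. -/
def OK : ∀ {n}, FCell X n → Prop
  | _, .old _ => True
  | _, .kp a b y => OK a ∧ OK b ∧ rawPar a b ∧
      (T.toFunctor.obj GlobSet.pt).src _ y = rawPi b ∧
      (T.toFunctor.obj GlobSet.pt).tgt _ y = rawPi a

theorem ok_src : ∀ {n} {c : FCell X (n + 1)}, OK c → OK (rawSrc c)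
  | _, .old _, _ => trivial
  | _, .kp _ _ _, h => h.2.1

theorem ok_tgt : ∀ {n} {c : FCell X (n + 1)}, OK c → OK (rawTgt c)
  | _, .old _, _ => trivial
  | _, .kp _ _ _, h => h.1

theorem src_rawPi : ∀ {n} (c : FCell X (n + 1)), OK c →
    (T.toFunctor.obj GlobSet.pt).src n (rawPi c) = rawPi (rawSrc c)
  | _, .old x, _ => X.π.app_src _ x
  | _, .kp _ _ _, h => h.2.2.2.1

theorem tgt_rawPi : ∀ {n} (c : FCell X (n + 1)), OK c →
    (T.toFunctor.obj GlobSet.pt).tgt n (rawPi c) = rawPi (rawTgt c)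
  | _, .old x, _ => X.π.app_tgt _ x
  | _, .kp _ _ _, h => h.2.2.2.2

theorem rawSrc_rawSrc : ∀ {n} (c : FCell X (n + 2)), OK c →
    rawSrc (rawSrc c) = rawSrc (rawTgt c)
  | _, .old x, _ => congrArg FCell.old (X.Q.glob_ss _ x)
  | _, .kp _ _ _, h => h.2.2.1.1.symm

theorem rawTgt_rawTgt : ∀ {n} (c : FCell X (n + 2)), OK c →
    rawTgt (rawSrc c) = rawTgt (rawTgt c)
  | _, .old x, _ => congrArg FCell.old (X.Q.glob_tt _ x)
  | _, .kp _ _ _, h => h.2.2.1.2.symm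

/-- The underlying globular set of the free contracted collection. -/
def obj (X : Coll T) : GlobSet where
  cells n := { c : FCell X n // OK c }
  src _ c := ⟨rawSrc c.1, ok_src c.2⟩
  tgt _ c := ⟨rawTgt c.1, ok_tgt c.2⟩
  glob_ss _ c := Subtype.ext (rawSrc_rawSrc c.1 c.2)
  glob_tt _ c := Subtype.ext (rawTgt_rawTgt c.1 c.2)

/-- The projection of the free contracted collection. -/
def piF (X : Coll T) : obj X ⟶ T.toFunctor.obj GlobSet.pt where
  app _ c := rawPi c.1
  app_src _ c := src_rawPi c.1 c.2
  app_tgt _ c := tgt_rawPi c.1 c.2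

theorem par_of {n} {a b : (obj X).cells n} (h : (obj X).Parallel n a b) :
    rawPar a.1 b.1 := by
  cases n with
  | zero => trivial
  | succ n => exact ⟨congrArg Subtype.val h.1, congrArg Subtype.val h.2⟩

theorem par_to {n} {a b : (obj X).cells n} (h : rawPar a.1 b.1) :
    (obj X).Parallel n a b := by
  cases n with
  | zero => trivial
  | succ n => exact ⟨Subtype.ext h.1, Subtype.ext h.2⟩

/-- The free contracted collection on a collection. -/
def freeC (X : Coll T) : CColl T where
  Q := obj X
  π := piF X
  contr :=
    { κ := fun _ xp xm y hp hs ht => ⟨.kp xp.1 xm.1 y, ⟨xp.2, xm.2, par_of hp, hs, ht⟩⟩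
      κ_src := fun _ _ _ _ _ _ _ => Subtype.ext rfl
      κ_tgt := fun _ _ _ _ _ _ _ => Subtype.ext rfl
      κ_π := fun _ _ _ _ _ _ _ => rfl }

/-- The inclusion of generators. -/
def inc (X : Coll T) : X ⟶ (freeC X).toColl where
  hom :=
    { app := fun _ x => ⟨.old x, trivial⟩
      app_src := fun _ _ => rfl
      app_tgt := fun _ _ => rfl }
  hom_π := GlobHom.hext fun _ _ => rfl

/-- Congruence lemma for contractions. -/
theorem contr_congr (Y : CColl T) (n : ℕ) {xp xp' xm xm' : Y.toColl.Q.cells n}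
    {y : (T.toFunctor.obj GlobSet.pt).cells (n + 1)}
    (h1 : xp = xp') (h2 : xm = xm') (hp hs ht hp' hs' ht') :
    Y.contr.κ n xp xm y hp hs ht = Y.contr.κ n xp' xm' y hp' hs' ht' := by
  subst h1; subst h2; rfl

section Lift

variable (Y : CColl T) (g : X ⟶ Y.toColl)

/-- The data of the lift at a fixed level. -/
structure LiftPack (n : ℕ) where
  F : ∀ c : FCell X n, OK c → Y.toColl.Q.cells n
  pi : ∀ c h, Y.toColl.π.app n (F c h) = rawPi c
  oldEq : ∀ x h, F (.old x) h = g.hom.app n x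
  par : ∀ a b ha hb, rawPar a b → Y.toColl.Q.Parallel n (F a ha) (F b hb)

/-- The tower of lifts. -/
def lifts : ∀ n, LiftPack Y g n
  | 0 =>
    { F := fun c _ => match c with | .old x => g.hom.app 0 x
      pi := fun c _ => by
        cases c with
        | old x => exact GlobHom.congr_app g.hom_π 0 x
      oldEq := fun _ _ => rfl
      par := fun _ _ _ _ _ => trivial }
  | n + 1 =>
    let P := lifts n
    let F : ∀ c : FCell X (n + 1), OK c → Y.toColl.Q.cells (n + 1) := fun c h =>
      match c, h with
      | .old x, _ => g.hom.app (n + 1) x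
      | .kp a b y, h =>
        Y.contr.κ n (P.F a h.1) (P.F b h.2.1) y (P.par a b h.1 h.2.1 h.2.2.1)
          (by rw [P.pi]; exact h.2.2.2.1) (by rw [P.pi]; exact h.2.2.2.2)
    have hsrc : ∀ c h, Y.toColl.Q.src n (F c h) = P.F (rawSrc c) (ok_src h) := by
      intro c h
      cases c with
      | old x =>
        show Y.toColl.Q.src n (g.hom.app (n + 1) x) = P.F (.old (X.Q.src n x)) _
        rw [g.hom.app_src]; exact (P.oldEq _ _).symm
      | kp a b y => exact Y.contr.κ_src _ _ _ _ _ _ _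
    have htgt : ∀ c h, Y.toColl.Q.tgt n (F c h) = P.F (rawTgt c) (ok_tgt h) := by
      intro c h
      cases c with
      | old x =>
        show Y.toColl.Q.tgt n (g.hom.app (n + 1) x) = P.F (.old (X.Q.tgt n x)) _
        rw [g.hom.app_tgt]; exact (P.oldEq _ _).symm
      | kp a b y => exact Y.contr.κ_tgt _ _ _ _ _ _ _
    have hFcongr : ∀ (a b : FCell X n) ha hb, a = b → P.F a ha = P.F b hb := by
      intro a b ha hb h; subst h; rfl
    { F := F
      pi := fun c h => by
        cases c with
        | old x => exact GlobHom.congr_app g.hom_π (n + 1) x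
        | kp a b y => exact Y.contr.κ_π _ _ _ _ _ _ _
      oldEq := fun _ _ => rfl
      par := fun a b ha hb hp => by
        refine ⟨?_, ?_⟩
        · rw [hsrc, hsrc]; exact hFcongr _ _ _ _ hp.1
        · rw [htgt, htgt]; exact hFcongr _ _ _ _ hp.2 }

theorem lift_src (n : ℕ) (c : FCell X (n + 1)) (h : OK c) :
    Y.toColl.Q.src n ((lifts Y g (n + 1)).F c h) = (lifts Y g n).F (rawSrc c) (ok_src h) := by
  cases c with
  | old x =>
    show Y.toColl.Q.src n (g.hom.app (n + 1) x) = (lifts Y g n).F (.old (X.Q.src n x)) _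
    rw [g.hom.app_src]; exact ((lifts Y g n).oldEq _ _).symm
  | kp a b y => exact Y.contr.κ_src _ _ _ _ _ _ _

theorem lift_tgt (n : ℕ) (c : FCell X (n + 1)) (h : OK c) :
    Y.toColl.Q.tgt n ((lifts Y g (n + 1)).F c h) = (lifts Y g n).F (rawTgt c) (ok_tgt h) := by
  cases c with
  | old x =>
    show Y.toColl.Q.tgt n (g.hom.app (n + 1) x) = (lifts Y g n).F (.old (X.Q.tgt n x)) _
    rw [g.hom.app_tgt]; exact ((lifts Y g n).oldEq _ _).symm
  | kp a b y => exact Y.contr.κ_tgt _ _ _ _ _ _ _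

/-- The lift of a collection morphism to the free contracted collection. -/
def liftHom : freeC X ⟶ Y where
  hom :=
    { app := fun n c => (lifts Y g n).F c.1 c.2
      app_src := fun n c => lift_src Y g n c.1 c.2
      app_tgt := fun n c => lift_tgt Y g n c.1 c.2 }
  hom_π := GlobHom.hext fun n c => (lifts Y g n).pi c.1 c.2
  hom_contr := fun n xp xm y hp hs ht hp' hs' ht' => by
    show Y.contr.κ n ((lifts Y g n).F xp.1 _) ((lifts Y g n).F xm.1 _) y _ _ _ = _
    exact contr_congr Y n rfl rfl _ _ _ _ _ _

theorem lift_unique (φ : freeC X ⟶ Y)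
    (hφ : ∀ n (x : X.Q.cells n), φ.hom.app n ⟨.old x, trivial⟩ = g.hom.app n x) :
    ∀ {n} (c : FCell X n) (h : OK c), φ.hom.app n ⟨c, h⟩ = (lifts Y g n).F c h := by
  intro n c
  induction c with
  | old x => intro h; exact (hφ _ x).trans ((lifts Y g _).oldEq x h).symm
  | kp a b y iha ihb =>
    intro h
    rename_i n
    have hpr : (freeC X).toColl.Q.Parallel n ⟨a, h.1⟩ ⟨b, h.2.1⟩ := par_to h.2.2.1
    have hsr : (T.toFunctor.obj GlobSet.pt).src n y = (freeC X).toColl.π.app n ⟨b, h.2.1⟩ :=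
      h.2.2.2.1
    have htr : (T.toFunctor.obj GlobSet.pt).tgt n y = (freeC X).toColl.π.app n ⟨a, h.1⟩ :=
      h.2.2.2.2
    have hpr' : Y.toColl.Q.Parallel n (φ.hom.app n ⟨a, h.1⟩) (φ.hom.app n ⟨b, h.2.1⟩) :=
      GlobHom.parallel_map φ.hom hpr
    have hsr' : (T.toFunctor.obj GlobSet.pt).src n y = Y.toColl.π.app n (φ.hom.app n ⟨b, h.2.1⟩) :=
      hsr.trans (GlobHom.congr_app φ.hom_π n ⟨b, h.2.1⟩).symm
    have htr' : (T.toFunctor.obj GlobSet.pt).tgt n y = Y.toColl.π.app n (φ.hom.app n ⟨a, h.1⟩) :=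
      htr.trans (GlobHom.congr_app φ.hom_π n ⟨a, h.1⟩).symm
    have : (⟨.kp a b y, h⟩ : (freeC X).toColl.Q.cells (n + 1))
        = (freeC X).contr.κ n ⟨a, h.1⟩ ⟨b, h.2.1⟩ y hpr hsr htr := rfl
    rw [this, φ.hom_contr n ⟨a, h.1⟩ ⟨b, h.2.1⟩ y hpr hsr htr hpr' hsr' htr']
    exact contr_congr Y n (iha h.1) (ihb h.2.1) _ _ _ _ _ _

end Lift

/-- The hom-set equivalence exhibiting `freeC` as left adjoint to the forgetful functor. -/
def homEquiv (X : Coll T) (Y : CColl T) :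
    (freeC X ⟶ Y) ≃ (X ⟶ (forgetCColl T).obj Y) where
  toFun φ := inc X ≫ (forgetCColl T).map φ
  invFun g := liftHom Y g
  left_inv φ := by
    apply CCollHom.hext
    apply GlobHom.hext
    intro n c
    exact (lift_unique _ _ φ (fun _ _ => rfl) c.1 c.2).symm
  right_inv g := CollHom.hext (GlobHom.hext fun n x => (lifts Y g n).oldEq x trivial)

theorem homEquiv_natural (X : Coll T) (Y Y' : CColl T) (g : Y ⟶ Y') (h : freeC X ⟶ Y) :
    homEquiv X Y' (h ≫ g) = homEquiv X Y h ≫ (forgetCColl T).map g :=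
  CollHom.hext (GlobHom.hext fun _ _ => rfl)

/-- The adjunction between the free contracted collection functor and the forgetful functor. -/
noncomputable def adjW (T : Monad GlobSet) :
    Adjunction.leftAdjointOfEquiv (G := forgetCColl T) (F_obj := freeC) homEquiv
        homEquiv_natural ⊣
      forgetCColl T :=
  Adjunction.adjunctionOfEquivLeft _ _

instance : (forgetCColl T).IsRightAdjoint :=
  ⟨_, ⟨adjW T⟩⟩

end FreeContr


/-! ### Part C: monadicity of the forgetful functor, via Beck's theorem. -/

namespace Beck

variable {T : Monad GlobSet}

/-- Morphisms of contracted collections commute with contractions, with canonical proofs. -/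
theorem app_contr {X Y : CColl T} (φ : X ⟶ Y) (n : ℕ) (xp xm : X.toColl.Q.cells n)
    (y : (T.toFunctor.obj GlobSet.pt).cells (n + 1)) (hp hs ht) :
    φ.hom.app (n + 1) (X.contr.κ n xp xm y hp hs ht)
      = Y.contr.κ n (φ.hom.app n xp) (φ.hom.app n xm) y
          (GlobHom.parallel_map φ.hom hp)
          (hs.trans (GlobHom.congr_app φ.hom_π n xm).symm)
          (ht.trans (GlobHom.congr_app φ.hom_π n xp).symm) :=
  φ.hom_contr n xp xm y hp hs ht _ _ _

section SplitCoeq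

variable {A B : CColl T} (f g : A ⟶ B) {Z : Coll T} {cπ : B.toColl ⟶ Z}
variable (sp : IsSplitCoequalizer ((forgetCColl T).map f) ((forgetCColl T).map g) cπ)

/-- Section/retraction identities at the element level. -/
theorem sec_cπ (n : ℕ) (x : Z.Q.cells n) :
    cπ.hom.app n (sp.rightSection.hom.app n x) = x :=
  GlobHom.congr_app (congrArg CollHom.hom sp.rightSection_π) n x

theorem t_g (n : ℕ) (x : B.toColl.Q.cells n) :
    g.hom.app n (sp.leftSection.hom.app n x) = x :=
  GlobHom.congr_app (congrArg CollHom.hom sp.leftSection_bottom) n x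

theorem t_f (n : ℕ) (x : B.toColl.Q.cells n) :
    f.hom.app n (sp.leftSection.hom.app n x)
      = sp.rightSection.hom.app n (cπ.hom.app n x) :=
  GlobHom.congr_app (congrArg CollHom.hom sp.leftSection_top) n x

include sp in
theorem cπ_fg (n : ℕ) (x : A.toColl.Q.cells n) :
    cπ.hom.app n (f.hom.app n x) = cπ.hom.app n (g.hom.app n x) :=
  GlobHom.congr_app (congrArg CollHom.hom sp.condition) n x

/-- The contraction on the split coequalizer. -/
noncomputable def zContr : Contraction Z.π where
  κ n xp xm y hp hs ht :=
    cπ.hom.app (n + 1) (B.contr.κ n (sp.rightSection.hom.app n xp)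
      (sp.rightSection.hom.app n xm) y
      (GlobHom.parallel_map sp.rightSection.hom hp)
      (hs.trans (GlobHom.congr_app sp.rightSection.hom_π n xm).symm)
      (ht.trans (GlobHom.congr_app sp.rightSection.hom_π n xp).symm))
  κ_src n xp xm y hp hs ht := by
    rw [cπ.hom.app_src]; exact (congrArg _ (B.contr.κ_src _ _ _ _ _ _ _)).trans (sec_cπ f g sp n xm)
  κ_tgt n xp xm y hp hs ht := by
    rw [cπ.hom.app_tgt]; exact (congrArg _ (B.contr.κ_tgt _ _ _ _ _ _ _)).trans (sec_cπ f g sp n xp)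
  κ_π n xp xm y hp hs ht :=
    (GlobHom.congr_app cπ.hom_π (n + 1) _).trans (B.contr.κ_π _ _ _ _ _ _ _)

/-- The split coequalizer as a contracted collection. -/
noncomputable def zC : CColl T where
  toColl := Z
  contr := zContr f g sp

/-- The coequalizer projection as a morphism of contracted collections. -/
noncomputable def piHat : B ⟶ zC f g sp where
  hom := cπ.hom
  hom_π := cπ.hom_π
  hom_contr := by
    intro n xp xm y hp hs ht hp' hs' ht'
    show cπ.hom.app (n + 1) (B.contr.κ n xp xm y hp hs ht)
      = cπ.hom.app (n + 1) (B.contr.κ n (sp.rightSection.hom.app n (cπ.hom.app n xp))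
          (sp.rightSection.hom.app n (cπ.hom.app n xm)) y _ _ _)
    have e1 : B.contr.κ n xp xm y hp hs ht
        = B.contr.κ n (g.hom.app n (sp.leftSection.hom.app n xp))
            (g.hom.app n (sp.leftSection.hom.app n xm)) y
            (by rw [t_g f g sp, t_g f g sp]; exact hp)
            (by rw [t_g f g sp]; exact hs) (by rw [t_g f g sp]; exact ht) :=
      FreeContr.contr_congr B n (t_g f g sp n xp).symm (t_g f g sp n xm).symm _ _ _ _ _ _
    have hpA : A.toColl.Q.Parallel n (sp.leftSection.hom.app n xp)
        (sp.leftSection.hom.app n xm) := GlobHom.parallel_map sp.leftSection.hom hp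
    have hsA : (T.toFunctor.obj GlobSet.pt).src n y
        = A.toColl.π.app n (sp.leftSection.hom.app n xm) :=
      hs.trans (GlobHom.congr_app sp.leftSection.hom_π n xm).symm
    have htA : (T.toFunctor.obj GlobSet.pt).tgt n y
        = A.toColl.π.app n (sp.leftSection.hom.app n xp) :=
      ht.trans (GlobHom.congr_app sp.leftSection.hom_π n xp).symm
    have e2 : B.contr.κ n (g.hom.app n (sp.leftSection.hom.app n xp))
          (g.hom.app n (sp.leftSection.hom.app n xm)) y _ _ _
        = g.hom.app (n + 1) (A.contr.κ n (sp.leftSection.hom.app n xp)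
            (sp.leftSection.hom.app n xm) y hpA hsA htA) :=
      (app_contr g n _ _ y hpA hsA htA).symm
    rw [e1, e2, ← cπ_fg f g sp, app_contr f n _ _ y hpA hsA htA]
    exact congrArg (cπ.hom.app (n + 1))
      (FreeContr.contr_congr B n (t_f f g sp n xp) (t_f f g sp n xm) _ _ _ _ _ _)

theorem cofork_condition : f ≫ piHat f g sp = g ≫ piHat f g sp :=
  CCollHom.hext (congrArg CollHom.hom sp.condition)

/-- The lifted cofork is a colimit in the category of contracted collections. -/
noncomputable def coforkIsColimit :
    IsColimit (Cofork.ofπ (piHat f g sp) (cofork_condition f g sp)) := by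
  apply Cofork.IsColimit.mk'
  intro s
  have hsπ : ∀ (n : ℕ) (x : A.toColl.Q.cells n),
      s.π.hom.app n (f.hom.app n x) = s.π.hom.app n (g.hom.app n x) := by
    intro n x
    exact GlobHom.congr_app (congrArg CCollHom.hom s.condition) n x
  have hπl : ∀ (n : ℕ) (x : B.toColl.Q.cells n),
      s.π.hom.app n (sp.rightSection.hom.app n (cπ.hom.app n x)) = s.π.hom.app n x := by
    intro n x
    exact ((congrArg _ (t_f f g sp n x)).symm.trans (hsπ n _)).trans (congrArg _ (t_g f g sp n x))
  refine ⟨⟨sp.rightSection.hom ≫ s.π.hom, ?_, ?_⟩, ?_, ?_⟩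
  · exact GlobHom.hext fun n x =>
      (GlobHom.congr_app s.π.hom_π n _).trans (GlobHom.congr_app sp.rightSection.hom_π n x)
  · intro n xp xm y hp hs ht hp' hs' ht'
    show s.π.hom.app (n + 1) (sp.rightSection.hom.app (n + 1)
        (cπ.hom.app (n + 1) (B.contr.κ n _ _ y _ _ _))) = _
    refine (hπl (n + 1) _).trans ((app_contr (X := B) s.π n _ _ y _ _ _).trans ?_)
    exact FreeContr.contr_congr s.pt n rfl rfl _ _ _ _ _ _
  · exact CCollHom.hext (GlobHom.hext fun n x => hπl n x)
  · intro m hm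
    apply CCollHom.hext
    apply GlobHom.hext
    intro n x
    have h1 : m.hom.app n (cπ.hom.app n (sp.rightSection.hom.app n x))
        = s.π.hom.app n (sp.rightSection.hom.app n x) :=
      GlobHom.congr_app (congrArg CCollHom.hom hm) n _
    exact (congrArg (m.hom.app n) (sec_cπ f g sp n x).symm).trans h1

end SplitCoeq

instance : Monad.HasCoequalizerOfIsSplitPair (forgetCColl T) where
  out f g _ :=
    HasColimit.mk ⟨_, coforkIsColimit f g
      (HasSplitCoequalizer.isSplitCoequalizer ((forgetCColl T).map f) ((forgetCColl T).map g))⟩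

instance : Monad.PreservesColimitOfIsSplitPair (forgetCColl T) where
  out f g _ := by
    have sp := HasSplitCoequalizer.isSplitCoequalizer ((forgetCColl T).map f)
      ((forgetCColl T).map g)
    refine preservesColimit_of_preserves_colimit_cocone (coforkIsColimit f g sp) ?_
    refine (isColimitMapCoconeCoforkEquiv (forgetCColl T) (cofork_condition f g sp)).symm ?_
    exact sp.isCoequalizer

instance : (forgetCColl T).ReflectsIsomorphisms where
  reflects {X Y} φ hiso := by
    letI := hiso
    let i := CategoryTheory.inv ((forgetCColl T).map φ)
    have hfi : ∀ n x, φ.hom.app n (i.hom.app n x) = x := fun n x =>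
      GlobHom.congr_app (congrArg CollHom.hom
        (IsIso.inv_hom_id ((forgetCColl T).map φ))) n x
    have hif : ∀ n x, i.hom.app n (φ.hom.app n x) = x := fun n x =>
      GlobHom.congr_app (congrArg CollHom.hom
        (IsIso.hom_inv_id ((forgetCColl T).map φ))) n x
    refine ⟨⟨⟨i.hom, i.hom_π, ?_⟩, ?_, ?_⟩⟩
    · intro n xp xm y hp hs ht hp' hs' ht'
      have e1 : Y.contr.κ n xp xm y hp hs ht
          = Y.contr.κ n (φ.hom.app n (i.hom.app n xp)) (φ.hom.app n (i.hom.app n xm)) y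
              (cast (congrArg₂ (Y.toColl.Q.Parallel n) (hfi n xp) (hfi n xm)).symm hp)
              (hs.trans (congrArg (Y.toColl.π.app n) (hfi n xm)).symm)
              (ht.trans (congrArg (Y.toColl.π.app n) (hfi n xp)).symm) :=
        FreeContr.contr_congr Y n (hfi n xp).symm (hfi n xm).symm _ _ _ _ _ _
      rw [e1, ← app_contr φ n _ _ y hp' hs' ht', hif]
    · exact CCollHom.hext (GlobHom.hext fun n x => hif n x)
    · exact CCollHom.hext (GlobHom.hext fun n x => hfi n x)

/-- The forgetful functor from contracted collections is monadic. -/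
noncomputable def monadicW (T : Monad GlobSet) : MonadicRightAdjoint (forgetCColl T) :=
  Monad.monadicOfHasPreservesGSplitCoequalizersOfReflectsIsomorphisms (FreeContr.adjW T)

end Beck


/-! ### Part D: the forgetful functor preserves filtered colimits. -/

namespace Filt

variable {T : Monad GlobSet} {J : Type} [SmallCategory J] (K : J ⥤ CColl T)

/-- The underlying globular set at a stage. -/
abbrev Ob (j : J) : GlobSet := (K.obj j).toColl.Q

/-- Transition maps of the diagram at the element level. -/
abbrev push {j k : J} (f : j ⟶ k) (n : ℕ) : (Ob K j).cells n → (Ob K k).cells n :=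
  (K.map f).hom.app n

theorem push_id (j : J) (n : ℕ) (x : (Ob K j).cells n) : push K (𝟙 j) n x = x :=
  GlobHom.congr_app (congrArg CCollHom.hom (K.map_id j)) n x

theorem push_comp {i j k : J} (f : i ⟶ j) (g : j ⟶ k) (n : ℕ) (x : (Ob K i).cells n) :
    push K (f ≫ g) n x = push K g n (push K f n x) :=
  GlobHom.congr_app (congrArg CCollHom.hom (K.map_comp f g)) n x

theorem push_src {j k : J} (f : j ⟶ k) (n : ℕ) (x : (Ob K j).cells (n + 1)) :
    push K f n ((Ob K j).src n x) = (Ob K k).src n (push K f (n + 1) x) :=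
  ((K.map f).hom.app_src n x).symm

theorem push_tgt {j k : J} (f : j ⟶ k) (n : ℕ) (x : (Ob K j).cells (n + 1)) :
    push K f n ((Ob K j).tgt n x) = (Ob K k).tgt n (push K f (n + 1) x) :=
  ((K.map f).hom.app_tgt n x).symm

theorem push_pi {j k : J} (f : j ⟶ k) (n : ℕ) (x : (Ob K j).cells n) :
    (K.obj k).toColl.π.app n (push K f n x) = (K.obj j).toColl.π.app n x :=
  GlobHom.congr_app (K.map f).hom_π n x

/-- Elements of the levelwise colimit, before quotienting. -/
def Cell (n : ℕ) : Type := Σ j : J, (Ob K j).cells n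

/-- Two elements are related if they have a common push-forward. -/
def Rel (n : ℕ) (p q : Cell K n) : Prop :=
  ∃ (k : J) (u : p.1 ⟶ k) (v : q.1 ⟶ k), push K u n p.2 = push K v n q.2

theorem rel_refl {n : ℕ} (p : Cell K n) : Rel K n p p := ⟨p.1, 𝟙 p.1, 𝟙 p.1, rfl⟩

theorem rel_symm {n : ℕ} {p q : Cell K n} (h : Rel K n p q) : Rel K n q p := by
  obtain ⟨k, u, v, huv⟩ := h
  exact ⟨k, v, u, huv.symm⟩

variable [IsFiltered J]

theorem rel_trans {n : ℕ} {p q r : Cell K n} (h1 : Rel K n p q) (h2 : Rel K n q r) :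
    Rel K n p r := by
  obtain ⟨k1, u1, v1, e1⟩ := h1
  obtain ⟨k2, u2, v2, e2⟩ := h2
  let α : k1 ⟶ IsFiltered.max k1 k2 := IsFiltered.leftToMax k1 k2
  let β : k2 ⟶ IsFiltered.max k1 k2 := IsFiltered.rightToMax k1 k2
  let h : IsFiltered.max k1 k2 ⟶ IsFiltered.coeq (v1 ≫ α) (u2 ≫ β) :=
    IsFiltered.coeqHom (v1 ≫ α) (u2 ≫ β)
  refine ⟨_, u1 ≫ (α ≫ h), v2 ≫ (β ≫ h), ?_⟩
  have hc : (v1 ≫ α) ≫ h = (u2 ≫ β) ≫ h := IsFiltered.coeq_condition _ _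
  calc push K (u1 ≫ α ≫ h) n p.2
      = push K (α ≫ h) n (push K u1 n p.2) := push_comp K _ _ n _
    _ = push K (α ≫ h) n (push K v1 n q.2) := by rw [e1]
    _ = push K ((v1 ≫ α) ≫ h) n q.2 := by
        rw [Category.assoc, push_comp K v1 (α ≫ h)]
    _ = push K ((u2 ≫ β) ≫ h) n q.2 := by rw [hc]
    _ = push K (β ≫ h) n (push K u2 n q.2) := by
        rw [Category.assoc, push_comp K u2 (β ≫ h)]
    _ = push K (β ≫ h) n (push K v2 n r.2) := by rw [e2]
    _ = push K (v2 ≫ β ≫ h) n r.2 := (push_comp K v2 (β ≫ h) n _).symm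

theorem rel_of_mk_eq {n : ℕ} {p q : Cell K n}
    (h : Quot.mk (Rel K n) p = Quot.mk (Rel K n) q) : Rel K n p q := by
  have := congrArg
    (Quot.lift (Rel K n p) fun a b hab =>
      propext ⟨fun h' => rel_trans K h' hab, fun h' => rel_trans K h' (rel_symm K hab)⟩) h
  exact cast this (rel_refl K p)

/-- Pushing along equal morphisms. -/
theorem push_eqc {n : ℕ} {j l : J} {φ ψ : j ⟶ l} (h : φ = ψ) (x : (Ob K j).cells n) :
    push K φ n x = push K ψ n x := by rw [h]

/-- Combining two pairs of identifications at common stages into a single pair of maps. -/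
theorem combine2 {n n' : ℕ} {j m : J} {a : (Ob K j).cells n} {b : (Ob K m).cells n}
    {c : (Ob K j).cells n'} {d : (Ob K m).cells n'}
    (h1 : Rel K n ⟨j, a⟩ ⟨m, b⟩) (h2 : Rel K n' ⟨j, c⟩ ⟨m, d⟩) :
    ∃ (l : J) (φ : j ⟶ l) (ψ : m ⟶ l),
      push K φ n a = push K ψ n b ∧ push K φ n' c = push K ψ n' d := by
  obtain ⟨k1, f1, g1, e1'⟩ := h1
  obtain ⟨k2, f2, g2, e2'⟩ := h2
  replace e1' : push K f1 n a = push K g1 n b := e1'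
  replace e2' : push K f2 n' c = push K g2 n' d := e2'
  let u : k1 ⟶ IsFiltered.max k1 k2 := IsFiltered.leftToMax k1 k2
  let v : k2 ⟶ IsFiltered.max k1 k2 := IsFiltered.rightToMax k1 k2
  let c1 := IsFiltered.coeqHom (f1 ≫ u) (f2 ≫ v)
  let c2 := IsFiltered.coeqHom ((g1 ≫ u) ≫ c1) ((g2 ≫ v) ≫ c1)
  have hφ : f1 ≫ u ≫ c1 ≫ c2 = f2 ≫ v ≫ c1 ≫ c2 := by
    simpa using congrArg (fun z => z ≫ c2) (IsFiltered.coeq_condition (f1 ≫ u) (f2 ≫ v))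
  have hψ : g2 ≫ v ≫ c1 ≫ c2 = g1 ≫ u ≫ c1 ≫ c2 := by
    simpa using
      (IsFiltered.coeq_condition ((g1 ≫ u) ≫ c1) ((g2 ≫ v) ≫ c1)).symm
  refine ⟨_, f1 ≫ u ≫ c1 ≫ c2, g1 ≫ u ≫ c1 ≫ c2, ?_, ?_⟩
  · calc push K (f1 ≫ u ≫ c1 ≫ c2) n a
        = push K (u ≫ c1 ≫ c2) n (push K f1 n a) := push_comp K _ _ n _
      _ = push K (u ≫ c1 ≫ c2) n (push K g1 n b) := by rw [e1']
      _ = push K (g1 ≫ u ≫ c1 ≫ c2) n b := (push_comp K _ _ n _).symm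
  · calc push K (f1 ≫ u ≫ c1 ≫ c2) n' c
        = push K (f2 ≫ v ≫ c1 ≫ c2) n' c := push_eqc K hφ c
      _ = push K (v ≫ c1 ≫ c2) n' (push K f2 n' c) := push_comp K _ _ n' _
      _ = push K (v ≫ c1 ≫ c2) n' (push K g2 n' d) := by rw [e2']
      _ = push K (g2 ≫ v ≫ c1 ≫ c2) n' d := (push_comp K _ _ n' _).symm
      _ = push K (g1 ≫ u ≫ c1 ≫ c2) n' d := push_eqc K hψ d

/-- The underlying globular set of the colimit. -/
def colimQ : GlobSet where
  cells n := Quot (Rel K n)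
  src n := Quot.lift (fun p => Quot.mk (Rel K n) ⟨p.1, (Ob K p.1).src n p.2⟩)
    (by
      rintro p q ⟨k, u, v, huv⟩
      apply Quot.sound
      exact ⟨k, u, v, by rw [push_src, push_src, huv]⟩)
  tgt n := Quot.lift (fun p => Quot.mk (Rel K n) ⟨p.1, (Ob K p.1).tgt n p.2⟩)
    (by
      rintro p q ⟨k, u, v, huv⟩
      apply Quot.sound
      exact ⟨k, u, v, by rw [push_tgt, push_tgt, huv]⟩)
  glob_ss n := by
    apply Quot.ind
    intro p
    exact congrArg (fun z => Quot.mk (Rel K n) ⟨p.1, z⟩) ((Ob K p.1).glob_ss n p.2)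
  glob_tt n := by
    apply Quot.ind
    intro p
    exact congrArg (fun z => Quot.mk (Rel K n) ⟨p.1, z⟩) ((Ob K p.1).glob_tt n p.2)

/-- The projection of the colimit to `T(•)`. -/
def colimPi : colimQ K ⟶ T.toFunctor.obj GlobSet.pt where
  app n := Quot.lift (fun p => (K.obj p.1).toColl.π.app n p.2)
    (by
      rintro p q ⟨k, u, v, huv⟩
      show (K.obj p.1).toColl.π.app n p.2 = (K.obj q.1).toColl.π.app n q.2
      rw [← push_pi K u n p.2, ← push_pi K v n q.2, huv])
  app_src n := by
    apply Quot.ind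
    intro p
    exact (K.obj p.1).toColl.π.app_src n p.2
  app_tgt n := by
    apply Quot.ind
    intro p
    exact (K.obj p.1).toColl.π.app_tgt n p.2

/-- A witness presenting a parallel pair of colimit cells at a single stage. -/
structure Wit (n : ℕ) (xp xm : (colimQ K).cells n) where
  j : J
  a : (Ob K j).cells n
  b : (Ob K j).cells n
  ha : Quot.mk (Rel K n) ⟨j, a⟩ = xp
  hb : Quot.mk (Rel K n) ⟨j, b⟩ = xm
  par : (Ob K j).Parallel n a b

theorem wit_nonempty {n : ℕ} {xp xm : (colimQ K).cells n}
    (hp : (colimQ K).Parallel n xp xm) : Nonempty (Wit K n xp xm) := by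
  obtain ⟨p, hp1⟩ := Quot.exists_rep xp
  obtain ⟨q, hq1⟩ := Quot.exists_rep xm
  obtain ⟨j1, a0⟩ := p
  obtain ⟨j2, b0⟩ := q
  let α : j1 ⟶ IsFiltered.max j1 j2 := IsFiltered.leftToMax j1 j2
  let β : j2 ⟶ IsFiltered.max j1 j2 := IsFiltered.rightToMax j1 j2
  set j := IsFiltered.max j1 j2 with hj
  have ha1 : Quot.mk (Rel K n) ⟨j, push K α n a0⟩ = xp := by
    rw [← hp1]
    exact (Quot.sound ⟨j, α, 𝟙 j, by rw [push_id]⟩).symm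
  have hb1 : Quot.mk (Rel K n) ⟨j, push K β n b0⟩ = xm := by
    rw [← hq1]
    exact (Quot.sound ⟨j, β, 𝟙 j, by rw [push_id]⟩).symm
  cases n with
  | zero => exact ⟨⟨j, push K α 0 a0, push K β 0 b0, ha1, hb1, trivial⟩⟩
  | succ n =>
    have hsrc : Rel K n ⟨j, (Ob K j).src n (push K α (n + 1) a0)⟩
        ⟨j, (Ob K j).src n (push K β (n + 1) b0)⟩ := by
      apply rel_of_mk_eq
      have h1 : Quot.mk (Rel K n) ⟨j, (Ob K j).src n (push K α (n + 1) a0)⟩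
          = (colimQ K).src n xp := by rw [← ha1]; rfl
      have h2 : Quot.mk (Rel K n) ⟨j, (Ob K j).src n (push K β (n + 1) b0)⟩
          = (colimQ K).src n xm := by rw [← hb1]; rfl
      rw [h1, h2, hp.1]
    have htgt : Rel K n ⟨j, (Ob K j).tgt n (push K α (n + 1) a0)⟩
        ⟨j, (Ob K j).tgt n (push K β (n + 1) b0)⟩ := by
      apply rel_of_mk_eq
      have h1 : Quot.mk (Rel K n) ⟨j, (Ob K j).tgt n (push K α (n + 1) a0)⟩
          = (colimQ K).tgt n xp := by rw [← ha1]; rfl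
      have h2 : Quot.mk (Rel K n) ⟨j, (Ob K j).tgt n (push K β (n + 1) b0)⟩
          = (colimQ K).tgt n xm := by rw [← hb1]; rfl
      rw [h1, h2, hp.2]
    obtain ⟨l, φ, ψ, hS, hT⟩ := combine2 K hsrc htgt
    refine ⟨⟨l, push K φ (n + 1) (push K α (n + 1) a0), push K ψ (n + 1) (push K β (n + 1) b0),
      ?_, ?_, ?_, ?_⟩⟩
    · rw [← ha1]
      exact (Quot.sound ⟨l, φ, 𝟙 l, by rw [push_id]⟩).symm
    · rw [← hb1]
      exact (Quot.sound ⟨l, ψ, 𝟙 l, by rw [push_id]⟩).symm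
    · show (Ob K l).src n (push K φ (n + 1) (push K α (n + 1) a0))
          = (Ob K l).src n (push K ψ (n + 1) (push K β (n + 1) b0))
      rw [← push_src K φ, ← push_src K ψ, hS]
    · show (Ob K l).tgt n (push K φ (n + 1) (push K α (n + 1) a0))
          = (Ob K l).tgt n (push K ψ (n + 1) (push K β (n + 1) b0))
      rw [← push_tgt K φ, ← push_tgt K ψ, hT]

/-- A chosen witness. -/
noncomputable def wit {n : ℕ} (xp xm : (colimQ K).cells n)
    (hp : (colimQ K).Parallel n xp xm) : Wit K n xp xm :=
  Classical.choice (wit_nonempty K hp)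

/-- Stage-level side conditions transported through a witness. -/
theorem wit_hs {n : ℕ} {xp xm : (colimQ K).cells n} (w : Wit K n xp xm)
    {y : (T.toFunctor.obj GlobSet.pt).cells (n + 1)}
    (hs : (T.toFunctor.obj GlobSet.pt).src n y = (colimPi K).app n xm) :
    (T.toFunctor.obj GlobSet.pt).src n y = (K.obj w.j).toColl.π.app n w.b :=
  hs.trans (congrArg ((colimPi K).app n) w.hb.symm)

theorem wit_ht {n : ℕ} {xp xm : (colimQ K).cells n} (w : Wit K n xp xm)
    {y : (T.toFunctor.obj GlobSet.pt).cells (n + 1)}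
    (ht : (T.toFunctor.obj GlobSet.pt).tgt n y = (colimPi K).app n xp) :
    (T.toFunctor.obj GlobSet.pt).tgt n y = (K.obj w.j).toColl.π.app n w.a :=
  ht.trans (congrArg ((colimPi K).app n) w.ha.symm)

/-- Independence of the stage-level contraction from the choice of witness data. -/
theorem mk_kappa_eq {n : ℕ} {j m : J} (a b : (Ob K j).cells n) (c d : (Ob K m).cells n)
    (y : (T.toFunctor.obj GlobSet.pt).cells (n + 1))
    (hac : Quot.mk (Rel K n) ⟨j, a⟩ = Quot.mk (Rel K n) ⟨m, c⟩)
    (hbd : Quot.mk (Rel K n) ⟨j, b⟩ = Quot.mk (Rel K n) ⟨m, d⟩)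
    (p1 : (Ob K j).Parallel n a b) (p2) (p3) (q1 : (Ob K m).Parallel n c d) (q2) (q3) :
    Quot.mk (Rel K (n + 1)) ⟨j, (K.obj j).contr.κ n a b y p1 p2 p3⟩
      = Quot.mk (Rel K (n + 1)) ⟨m, (K.obj m).contr.κ n c d y q1 q2 q3⟩ := by
  obtain ⟨l, φ, ψ, hS, hT⟩ := combine2 K (rel_of_mk_eq K hac) (rel_of_mk_eq K hbd)
  have e1 : push K φ (n + 1) ((K.obj j).contr.κ n a b y p1 p2 p3)
      = (K.obj l).contr.κ n (push K φ n a) (push K φ n b) y _ _ _ :=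
    Beck.app_contr (K.map φ) n a b y p1 p2 p3
  have e2 : push K ψ (n + 1) ((K.obj m).contr.κ n c d y q1 q2 q3)
      = (K.obj l).contr.κ n (push K ψ n c) (push K ψ n d) y _ _ _ :=
    Beck.app_contr (K.map ψ) n c d y q1 q2 q3
  have e3 : (K.obj l).contr.κ n (push K φ n a) (push K φ n b) y
        (GlobHom.parallel_map (K.map φ).hom p1)
        (p2.trans (GlobHom.congr_app (K.map φ).hom_π n b).symm)
        (p3.trans (GlobHom.congr_app (K.map φ).hom_π n a).symm)
      = (K.obj l).contr.κ n (push K ψ n c) (push K ψ n d) y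
        (GlobHom.parallel_map (K.map ψ).hom q1)
        (q2.trans (GlobHom.congr_app (K.map ψ).hom_π n d).symm)
        (q3.trans (GlobHom.congr_app (K.map ψ).hom_π n c).symm) :=
    FreeContr.contr_congr (K.obj l) n hS hT _ _ _ _ _ _
  calc Quot.mk (Rel K (n + 1)) ⟨j, (K.obj j).contr.κ n a b y p1 p2 p3⟩
      = Quot.mk (Rel K (n + 1)) ⟨l, push K φ (n + 1) ((K.obj j).contr.κ n a b y p1 p2 p3)⟩ :=
        Quot.sound ⟨l, φ, 𝟙 l, by rw [push_id]⟩
    _ = Quot.mk (Rel K (n + 1)) ⟨l, push K ψ (n + 1) ((K.obj m).contr.κ n c d y q1 q2 q3)⟩ := by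
        rw [e1, e2, e3]
    _ = Quot.mk (Rel K (n + 1)) ⟨m, (K.obj m).contr.κ n c d y q1 q2 q3⟩ :=
        (Quot.sound ⟨l, ψ, 𝟙 l, by rw [push_id]⟩).symm

/-- The contraction on the colimit. -/
noncomputable def colimContr : Contraction (colimPi K) where
  κ n xp xm y hp hs ht :=
    Quot.mk (Rel K (n + 1)) ⟨(wit K xp xm hp).j,
      (K.obj (wit K xp xm hp).j).contr.κ n (wit K xp xm hp).a (wit K xp xm hp).b y
        (wit K xp xm hp).par (wit_hs K (wit K xp xm hp) hs) (wit_ht K (wit K xp xm hp) ht)⟩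
  κ_src n xp xm y hp hs ht := by
    show Quot.mk (Rel K n) ⟨(wit K xp xm hp).j, (Ob K (wit K xp xm hp).j).src n _⟩ = xm
    rw [(K.obj (wit K xp xm hp).j).contr.κ_src]
    exact (wit K xp xm hp).hb
  κ_tgt n xp xm y hp hs ht := by
    show Quot.mk (Rel K n) ⟨(wit K xp xm hp).j, (Ob K (wit K xp xm hp).j).tgt n _⟩ = xp
    rw [(K.obj (wit K xp xm hp).j).contr.κ_tgt]
    exact (wit K xp xm hp).ha
  κ_π n xp xm y hp hs ht := (K.obj (wit K xp xm hp).j).contr.κ_π n _ _ y _ _ _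

/-- The colimit as a contracted collection. -/
noncomputable def colimC : CColl T where
  Q := colimQ K
  π := colimPi K
  contr := colimContr K

/-- The chosen contraction agrees with any stage-level contraction. -/
theorem kappa_spec {n : ℕ} (j : J) (a b : (Ob K j).cells n)
    (y : (T.toFunctor.obj GlobSet.pt).cells (n + 1)) (p1 p2 p3)
    (hp : (colimQ K).Parallel n (Quot.mk (Rel K n) ⟨j, a⟩) (Quot.mk (Rel K n) ⟨j, b⟩))
    (hs : (T.toFunctor.obj GlobSet.pt).src n y
      = (colimPi K).app n (Quot.mk (Rel K n) ⟨j, b⟩))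
    (ht : (T.toFunctor.obj GlobSet.pt).tgt n y
      = (colimPi K).app n (Quot.mk (Rel K n) ⟨j, a⟩)) :
    (colimC K).contr.κ n (Quot.mk (Rel K n) ⟨j, a⟩) (Quot.mk (Rel K n) ⟨j, b⟩) y hp hs ht
      = Quot.mk (Rel K (n + 1)) ⟨j, (K.obj j).contr.κ n a b y p1 p2 p3⟩ := by
  apply mk_kappa_eq
  · exact (wit K _ _ hp).ha
  · exact (wit K _ _ hp).hb

/-- The colimit cocone. -/
noncomputable def colimCocone : Cocone K where
  pt := colimC K
  ι :=
    { app := fun j =>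
        { hom :=
            { app := fun n x => Quot.mk (Rel K n) ⟨j, x⟩
              app_src := fun n x => rfl
              app_tgt := fun n x => rfl }
          hom_π := GlobHom.hext fun n x => rfl
          hom_contr := fun n xp xm y hp hs ht hp' hs' ht' =>
            (kappa_spec K j xp xm y hp hs ht hp' hs' ht').symm }
      naturality := fun j k f => by
        apply CCollHom.hext
        apply GlobHom.hext
        intro n x
        exact (Quot.sound ⟨k, f, 𝟙 k, by rw [push_id]⟩).symm }

/-- The underlying morphism of the descent map. -/
def descHom (s : Cocone K) : (colimQ K) ⟶ s.pt.toColl.Q where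
  app n := Quot.lift (fun p => (s.ι.app p.1).hom.app n p.2)
    (by
      rintro p q ⟨k, u, v, huv⟩
      have h1 : ∀ (i : J) (f : i ⟶ k) (z : (Ob K i).cells n),
          (s.ι.app k).hom.app n (push K f n z) = (s.ι.app i).hom.app n z := by
        intro i f z
        exact GlobHom.congr_app (congrArg CCollHom.hom (s.ι.naturality f)) n z
      show (s.ι.app p.1).hom.app n p.2 = (s.ι.app q.1).hom.app n q.2
      rw [← h1 p.1 u p.2, ← h1 q.1 v q.2, huv])
  app_src n := by
    apply Quot.ind
    intro p
    exact (s.ι.app p.1).hom.app_src n p.2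
  app_tgt n := by
    apply Quot.ind
    intro p
    exact (s.ι.app p.1).hom.app_tgt n p.2

/-- The colimit cocone is a colimit in contracted collections. -/
noncomputable def colimIsColimit : IsColimit (colimCocone K) where
  desc s :=
    { hom := descHom K s
      hom_π := by
        apply GlobHom.hext
        intro n x
        induction x using Quot.ind with
        | _ p => exact GlobHom.congr_app (s.ι.app p.1).hom_π n p.2
      hom_contr := by
        intro n xp xm y hp hs ht hp' hs' ht'
        show (s.ι.app (wit K xp xm hp).j).hom.app (n + 1)
            ((K.obj (wit K xp xm hp).j).contr.κ n _ _ y _ _ _) = _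
        rw [Beck.app_contr (s.ι.app (wit K xp xm hp).j) n _ _ y _ _ _]
        exact FreeContr.contr_congr s.pt n
          (congrArg ((descHom K s).app n) (wit K xp xm hp).ha)
          (congrArg ((descHom K s).app n) (wit K xp xm hp).hb) _ _ _ _ _ _ }
  fac s j := CCollHom.hext (GlobHom.hext fun n x => rfl)
  uniq s m hm := by
    apply CCollHom.hext
    apply GlobHom.hext
    intro n x
    induction x using Quot.ind with
    | _ p => exact GlobHom.congr_app (congrArg CCollHom.hom (hm p.1)) n p.2

/-- The image of the colimit cocone under the forgetful functor is a colimit. -/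
noncomputable def colimMapIsColimit :
    IsColimit ((forgetCColl T).mapCocone (colimCocone K)) where
  desc s :=
    { hom :=
        { app := fun n => Quot.lift (fun p => (s.ι.app p.1).hom.app n p.2)
            (by
              rintro p q ⟨k, u, v, huv⟩
              have h1 : ∀ (i : J) (f : i ⟶ k) (z : (Ob K i).cells n),
                  (s.ι.app k).hom.app n (push K f n z) = (s.ι.app i).hom.app n z := by
                intro i f z
                exact GlobHom.congr_app (congrArg CollHom.hom (s.ι.naturality f)) n z
              show (s.ι.app p.1).hom.app n p.2 = (s.ι.app q.1).hom.app n q.2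
              rw [← h1 p.1 u p.2, ← h1 q.1 v q.2, huv])
          app_src := fun n => by
            apply Quot.ind
            intro p
            exact (s.ι.app p.1).hom.app_src n p.2
          app_tgt := fun n => by
            apply Quot.ind
            intro p
            exact (s.ι.app p.1).hom.app_tgt n p.2 }
      hom_π := by
        apply GlobHom.hext
        intro n x
        induction x using Quot.ind with
        | _ p => exact GlobHom.congr_app (s.ι.app p.1).hom_π n p.2 }
  fac s j := CollHom.hext (GlobHom.hext fun n x => rfl)
  uniq s m hm := by
    apply CollHom.hext
    apply GlobHom.hext
    intro n x
    induction x using Quot.ind with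
    | _ p => exact GlobHom.congr_app (congrArg CollHom.hom (hm p.1)) n p.2

end Filt

/-- The forgetful functor preserves filtered colimits. -/
theorem finitaryW (T : Monad GlobSet) : Finitary (forgetCColl T) := by
  intro J _ _
  refine ⟨⟨fun {K} => ?_⟩⟩
  exact preservesColimit_of_preserves_colimit_cocone
    (Filt.colimIsColimit K) (Filt.colimMapIsColimit K)



/-- The forgetful functor `W` from the category `Q^{T̂*,κ}_•` of globular
contracted `T̂*`-collections over `•` to the category `Q^{T̂*}_•` of globular
`T̂*`-collections over `•` (where `T̂*` is the free strict involutive globular ω-category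
monad), which forgets the contraction, is finitary, has a left adjoint, and the resulting
adjunction is monadic. -/
theorem forget_contraction_monadic (F : GlobSet ⥤ StarOmegaCat) (adj : F ⊣ forgetStar) :
    Finitary (forgetCColl adj.toMonad) ∧
    (forgetCColl adj.toMonad).IsRightAdjoint ∧
    Nonempty (MonadicRightAdjoint (forgetCColl adj.toMonad)) :=
  ⟨finitaryW adj.toMonad, inferInstance, ⟨Beck.monadicW adj.toMonad⟩⟩
end

section
/- The forgetful functor U* from the category Cf* of strict fully involutive globular ω-categories to the category Qf of globular ω-sets admits a left adjoint F*, the free strict involutive globular ω-category functor: for every globular ω-set Q there is a morphism of globular ω-sets η*_Q : Q → U*(F*(Q)) such that for every morphism of globular ω-sets φ : Q → U*(Ĉ) into the underlying globular ω-set of a strict fully involutive globular ω-category Ĉ there exists a unique involutive ω-functor φ̂ : F*(Q) → Ĉ with φ = U*(φ̂) ∘ η*_Q. -/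
open CategoryTheory CategoryTheory.Limits

namespace FreeStar

variable (Q : GlobSet)

/-- Raw terms over a globular set. -/
inductive T : ℕ → Type
  | gen : ∀ n, Q.cells n → T n
  | tid : ∀ n, T n → T (n + 1)
  | tcomp : ∀ p k, T (p + (k + 1)) → T (p + (k + 1)) → T (p + (k + 1))
  | tinv : ∀ (q n : ℕ), T n → T n

variable {Q}

/-- Term-level (source, target) pair. -/
def bnd : ∀ {m}, T Q m → T Q (m - 1) × T Q (m - 1)
  | _, .gen 0 x => (.gen 0 x, .gen 0 x)
  | _, .gen (n+1) x => (.gen n (Q.src n x), .gen n (Q.tgt n x))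
  | _, .tid _ t => (t, t)
  | _, .tcomp _ 0 x' x => ((bnd x).1, (bnd x').2)
  | _, .tcomp p (k+1) x' x => (.tcomp p k (bnd x').1 (bnd x).1, .tcomp p k (bnd x').2 (bnd x).2)
  | _, .tinv i 0 t => (.tinv i 0 t, .tinv i 0 t)
  | _, .tinv i (n+1) t =>
      if n = i then (.tinv i n (bnd t).2, .tinv i n (bnd t).1)
      else (.tinv i n (bnd t).1, .tinv i n (bnd t).2)

variable (C : StarOmegaCat) (φ : Q ⟶ forgetStar.obj C)

open scoped Classical in
/-- Evaluation of raw terms in a fully involutive ω-category. -/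
noncomputable def ev : ∀ {n}, T Q n → C.toGlobSet.cells n
  | _, .gen n x => φ.app n x
  | _, .tid n t => C.id' n (ev t)
  | _, .tcomp p k x' x =>
      if h : C.toGlobSet.srcIter (k+1) (ev x') = C.toGlobSet.tgtIter (k+1) (ev x) then
        C.comp p k (ev x') (ev x) h
      else ev x
  | _, .tinv i n t => C.inv i n (ev t)

/-- Well-formedness of a term relative to an evaluation. -/
def WFev : ∀ {n}, T Q n → Prop
  | _, .gen _ _ => True
  | _, .tid _ t => WFev t
  | _, .tcomp _ k x' x => WFev x' ∧ WFev x ∧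
      C.toGlobSet.srcIter (k+1) (ev C φ x') = C.toGlobSet.tgtIter (k+1) (ev C φ x)
  | _, .tinv _ _ t => WFev t


/-- Truncated source for cells. -/
def csrc (G : GlobSet) : ∀ {m}, G.cells m → G.cells (m - 1) := fun {m} =>
  match m with
  | 0 => id
  | _ + 1 => G.src _

/-- Truncated target for cells. -/
def ctgt (G : GlobSet) : ∀ {m}, G.cells m → G.cells (m - 1) := fun {m} =>
  match m with
  | 0 => id
  | _ + 1 => G.tgt _

theorem comp_congr (C : StrictOmegaCat) {p k} {a a' b b' : C.toGlobSet.cells (p + (k + 1))}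
    (ha : a = a') (hb : b = b') (h h') : C.comp p k a b h = C.comp p k a' b' h' := by
  subst ha; subst hb; rfl

theorem tgtIter_src (G : GlobSet) (k n : ℕ) (y : G.cells (n + (k + 1) + 1)) :
    G.tgtIter (k + 1) (G.src (n + (k + 1)) y) = G.tgtIter (k + 1) (G.tgt (n + (k + 1)) y) :=
  congrArg (G.tgtIter k) (G.glob_tt (n + k) y)

theorem srcIter_tgt (G : GlobSet) (k n : ℕ) (y : G.cells (n + (k + 1) + 1)) :
    G.srcIter (k + 1) (G.tgt (n + (k + 1)) y) = G.srcIter (k + 1) (G.src (n + (k + 1)) y) :=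
  (congrArg (G.srcIter k) (G.glob_ss (n + k) y)).symm

theorem ev_tcomp {p k : ℕ} {x' x : T Q (p + (k + 1))}
    (h : C.toGlobSet.srcIter (k+1) (ev C φ x') = C.toGlobSet.tgtIter (k+1) (ev C φ x)) :
    ev C φ (.tcomp p k x' x) = C.comp p k (ev C φ x') (ev C φ x) h := by
  rw [ev, dif_pos h]

theorem ev_bnd {m} (t : T Q m) (wf : WFev C φ t) :
    ev C φ (bnd t).1 = csrc C.toGlobSet (ev C φ t) ∧
    ev C φ (bnd t).2 = ctgt C.toGlobSet (ev C φ t) := by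
  induction t with
  | gen n x =>
    cases n with
    | zero => exact ⟨rfl, rfl⟩
    | succ n => exact ⟨(φ.app_src n x).symm, (φ.app_tgt n x).symm⟩
  | tid n t ih =>
    show ev C φ t = C.toGlobSet.src n (C.id' n (ev C φ t)) ∧
      ev C φ t = C.toGlobSet.tgt n (C.id' n (ev C φ t))
    rw [C.id_src, C.id_tgt]
    exact ⟨rfl, rfl⟩
  | tcomp p k x' x ih1 ih2 =>
    obtain ⟨w1, w2, hc⟩ := wf
    obtain ⟨hs1, ht1⟩ := ih1 w1
    obtain ⟨hs2, ht2⟩ := ih2 w2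
    rw [ev_tcomp C φ hc]
    cases k with
    | zero =>
      show ev C φ (bnd x).1 = C.toGlobSet.src p (C.comp p 0 (ev C φ x') (ev C φ x) hc) ∧
        ev C φ (bnd x').2 = C.toGlobSet.tgt p (C.comp p 0 (ev C φ x') (ev C φ x) hc)
      rw [C.comp_src_zero, C.comp_tgt_zero]
      exact ⟨hs2, ht1⟩
    | succ k =>
      have hs1' : ev C φ (bnd x').1 = C.toGlobSet.src (p+(k+1)) (ev C φ x') := hs1
      have ht1' : ev C φ (bnd x').2 = C.toGlobSet.tgt (p+(k+1)) (ev C φ x') := ht1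
      have hs2' : ev C φ (bnd x).1 = C.toGlobSet.src (p+(k+1)) (ev C φ x) := hs2
      have ht2' : ev C φ (bnd x).2 = C.toGlobSet.tgt (p+(k+1)) (ev C φ x) := ht2
      have hiter : C.toGlobSet.srcIter (k+1) (C.toGlobSet.src (p+(k+1)) (ev C φ x'))
          = C.toGlobSet.tgtIter (k+1) (C.toGlobSet.tgt (p+(k+1)) (ev C φ x)) := hc
      have hcs : C.toGlobSet.srcIter (k+1) (ev C φ (bnd x').1)
          = C.toGlobSet.tgtIter (k+1) (ev C φ (bnd x).1) := by
        rw [hs1', hs2', hiter]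
        exact (congrArg (C.toGlobSet.tgtIter k) (C.toGlobSet.glob_tt (p+k) (ev C φ x))).symm
      have hct : C.toGlobSet.srcIter (k+1) (ev C φ (bnd x').2)
          = C.toGlobSet.tgtIter (k+1) (ev C φ (bnd x).2) := by
        rw [ht1', ht2']
        exact ((congrArg (C.toGlobSet.srcIter k)
          (C.toGlobSet.glob_ss (p+k) (ev C φ x'))).symm).trans hiter
      have hcs' : C.toGlobSet.srcIter (k+1) (C.toGlobSet.src (p+(k+1)) (ev C φ x'))
          = C.toGlobSet.tgtIter (k+1) (C.toGlobSet.src (p+(k+1)) (ev C φ x)) := by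
        rw [← hs1', ← hs2']; exact hcs
      have hct' : C.toGlobSet.srcIter (k+1) (C.toGlobSet.tgt (p+(k+1)) (ev C φ x'))
          = C.toGlobSet.tgtIter (k+1) (C.toGlobSet.tgt (p+(k+1)) (ev C φ x)) := by
        rw [← ht1', ← ht2']; exact hct
      constructor
      · show ev C φ (T.tcomp p k (bnd x').1 (bnd x).1)
          = C.toGlobSet.src (p+(k+1)) (C.comp p (k+1) (ev C φ x') (ev C φ x) hc)
        rw [ev_tcomp C φ hcs, C.comp_src_succ p k _ _ hc hcs']
        exact comp_congr C.toStrictOmegaCat hs1' hs2' _ _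
      · show ev C φ (T.tcomp p k (bnd x').2 (bnd x).2)
          = C.toGlobSet.tgt (p+(k+1)) (C.comp p (k+1) (ev C φ x') (ev C φ x) hc)
        rw [ev_tcomp C φ hct, C.comp_tgt_succ p k _ _ hc hct']
        exact comp_congr C.toStrictOmegaCat ht1' ht2' _ _
  | tinv i n t ih =>
    obtain ⟨hs, ht⟩ := ih wf
    cases n with
    | zero => exact ⟨rfl, rfl⟩
    | succ n =>
      show ev C φ ((if n = i then ((T.tinv i n (bnd t).2 : T Q n), (T.tinv i n (bnd t).1 : T Q n))
          else (T.tinv i n (bnd t).1, T.tinv i n (bnd t).2)).1) = _ ∧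
        ev C φ ((if n = i then ((T.tinv i n (bnd t).2 : T Q n), (T.tinv i n (bnd t).1 : T Q n))
          else (T.tinv i n (bnd t).1, T.tinv i n (bnd t).2)).2) = _
      by_cases hni : n = i
      · subst hni
        rw [if_pos rfl]
        show C.inv n n (ev C φ (bnd t).2) = _ ∧ C.inv n n (ev C φ (bnd t).1) = _
        rw [hs, ht]
        exact ⟨C.inv_tgt_self n (ev C φ t), C.inv_src_self n (ev C φ t)⟩
      · rw [if_neg hni]
        show C.inv i n (ev C φ (bnd t).1) = _ ∧ C.inv i n (ev C φ (bnd t).2) = _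
        rw [hs, ht]
        exact ⟨C.inv_src_ne i n hni (ev C φ t), C.inv_tgt_ne i n hni (ev C φ t)⟩


theorem WFev_bnd {m} (t : T Q m) (wf : WFev C φ t) :
    WFev C φ (bnd t).1 ∧ WFev C φ (bnd t).2 := by
  induction t with
  | gen n x => cases n with
    | zero => exact ⟨trivial, trivial⟩
    | succ n => exact ⟨trivial, trivial⟩
  | tid n t ih => exact ⟨wf, wf⟩
  | tcomp p k x' x ih1 ih2 =>
    obtain ⟨w1, w2, hc⟩ := wf
    cases k with
    | zero => exact ⟨(ih2 w2).1, (ih1 w1).2⟩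
    | succ k =>
      obtain ⟨hs1, ht1⟩ := ev_bnd C φ x' w1
      obtain ⟨hs2, ht2⟩ := ev_bnd C φ x w2
      have hs1' : ev C φ (bnd x').1 = C.toGlobSet.src (p+(k+1)) (ev C φ x') := hs1
      have ht1' : ev C φ (bnd x').2 = C.toGlobSet.tgt (p+(k+1)) (ev C φ x') := ht1
      have hs2' : ev C φ (bnd x).1 = C.toGlobSet.src (p+(k+1)) (ev C φ x) := hs2
      have ht2' : ev C φ (bnd x).2 = C.toGlobSet.tgt (p+(k+1)) (ev C φ x) := ht2
      have hiter : C.toGlobSet.srcIter (k+1) (C.toGlobSet.src (p+(k+1)) (ev C φ x'))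
          = C.toGlobSet.tgtIter (k+1) (C.toGlobSet.tgt (p+(k+1)) (ev C φ x)) := hc
      have hcs : C.toGlobSet.srcIter (k+1) (ev C φ (bnd x').1)
          = C.toGlobSet.tgtIter (k+1) (ev C φ (bnd x).1) := by
        rw [hs1', hs2', hiter]
        exact (congrArg (C.toGlobSet.tgtIter k) (C.toGlobSet.glob_tt (p+k) (ev C φ x))).symm
      have hct : C.toGlobSet.srcIter (k+1) (ev C φ (bnd x').2)
          = C.toGlobSet.tgtIter (k+1) (ev C φ (bnd x).2) := by
        rw [ht1', ht2']
        exact ((congrArg (C.toGlobSet.srcIter k)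
          (C.toGlobSet.glob_ss (p+k) (ev C φ x'))).symm).trans hiter
      exact ⟨⟨(ih1 w1).1, (ih2 w2).1, hcs⟩, ⟨(ih1 w1).2, (ih2 w2).2, hct⟩⟩
  | tinv i n t ih =>
    cases n with
    | zero => exact ⟨wf, wf⟩
    | succ n =>
      by_cases h : n = i
      · show WFev C φ ((if n = i then ((T.tinv i n (bnd t).2 : T Q n), (T.tinv i n (bnd t).1 : T Q n))
          else (T.tinv i n (bnd t).1, T.tinv i n (bnd t).2)).1) ∧ WFev C φ
          ((if n = i then ((T.tinv i n (bnd t).2 : T Q n), (T.tinv i n (bnd t).1 : T Q n))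
          else (T.tinv i n (bnd t).1, T.tinv i n (bnd t).2)).2)
        rw [if_pos h]
        exact ⟨(ih wf).2, (ih wf).1⟩
      · show WFev C φ ((if n = i then ((T.tinv i n (bnd t).2 : T Q n), (T.tinv i n (bnd t).1 : T Q n))
          else (T.tinv i n (bnd t).1, T.tinv i n (bnd t).2)).1) ∧ WFev C φ
          ((if n = i then ((T.tinv i n (bnd t).2 : T Q n), (T.tinv i n (bnd t).1 : T Q n))
          else (T.tinv i n (bnd t).1, T.tinv i n (bnd t).2)).2)
        rw [if_neg h]
        exact ⟨(ih wf).1, (ih wf).2⟩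


variable (Q) in
/-- Terms well-formed under every evaluation. -/
def WFree (n : ℕ) (t : T Q n) : Prop :=
  ∀ (C : StarOmegaCat) (φ : Q ⟶ forgetStar.obj C), WFev C φ t

variable (Q) in
abbrev Tsub (n : ℕ) : Type := {t : T Q n // WFree Q n t}

variable (Q) in
def rr (n : ℕ) : Tsub Q n → Tsub Q n → Prop := fun a b =>
  ∀ (C : StarOmegaCat) (φ : Q ⟶ forgetStar.obj C), ev C φ a.1 = ev C φ b.1

variable (Q) in
/-- Cells of the free involutive ω-category. -/
abbrev FQcells (n : ℕ) : Type := Quot (rr Q n)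

def bsrc {n} (a : Tsub Q (n + 1)) : Tsub Q n :=
  ⟨(bnd a.1).1, fun C φ => (WFev_bnd C φ a.1 (a.2 C φ)).1⟩

def btgt {n} (a : Tsub Q (n + 1)) : Tsub Q n :=
  ⟨(bnd a.1).2, fun C φ => (WFev_bnd C φ a.1 (a.2 C φ)).2⟩

theorem ev_bsrc (C φ) {n} (a : Tsub Q (n + 1)) :
    ev C φ (bsrc a).1 = C.toGlobSet.src n (ev C φ a.1) :=
  (ev_bnd C φ a.1 (a.2 C φ)).1

theorem ev_btgt (C φ) {n} (a : Tsub Q (n + 1)) :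
    ev C φ (btgt a).1 = C.toGlobSet.tgt n (ev C φ a.1) :=
  (ev_bnd C φ a.1 (a.2 C φ)).2

variable (Q) in
/-- The underlying globular set of the free involutive ω-category. -/
abbrev FQglob : GlobSet where
  cells := FQcells Q
  src n := Quot.lift (fun a => Quot.mk _ (bsrc a)) (fun a b h => Quot.sound (fun C φ =>
    ((ev_bsrc C φ a).trans (congrArg _ (h C φ))).trans (ev_bsrc C φ b).symm))
  tgt n := Quot.lift (fun a => Quot.mk _ (btgt a)) (fun a b h => Quot.sound (fun C φ =>
    ((ev_btgt C φ a).trans (congrArg _ (h C φ))).trans (ev_btgt C φ b).symm))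
  glob_ss n x := by
    induction x using Quot.ind with | _ a =>
    refine Quot.sound (fun C φ => ?_)
    calc ev C φ (bsrc (bsrc a)).1 = C.toGlobSet.src n (ev C φ (bsrc a).1) := ev_bsrc C φ _
      _ = C.toGlobSet.src n (C.toGlobSet.src (n+1) (ev C φ a.1)) := congrArg _ (ev_bsrc C φ a)
      _ = C.toGlobSet.src n (C.toGlobSet.tgt (n+1) (ev C φ a.1)) := C.toGlobSet.glob_ss n _
      _ = C.toGlobSet.src n (ev C φ (btgt a).1) := (congrArg _ (ev_btgt C φ a)).symm
      _ = ev C φ (bsrc (btgt a)).1 := (ev_bsrc C φ _).symm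
  glob_tt n x := by
    induction x using Quot.ind with | _ a =>
    refine Quot.sound (fun C φ => ?_)
    calc ev C φ (btgt (bsrc a)).1 = C.toGlobSet.tgt n (ev C φ (bsrc a).1) := ev_btgt C φ _
      _ = C.toGlobSet.tgt n (C.toGlobSet.src (n+1) (ev C φ a.1)) := congrArg _ (ev_bsrc C φ a)
      _ = C.toGlobSet.tgt n (C.toGlobSet.tgt (n+1) (ev C φ a.1)) := C.toGlobSet.glob_tt n _
      _ = C.toGlobSet.tgt n (ev C φ (btgt a).1) := (congrArg _ (ev_btgt C φ a)).symm
      _ = ev C φ (btgt (btgt a)).1 := (ev_btgt C φ _).symm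

/-- Evaluation as a morphism of globular sets out of the free object. -/
noncomputable def down : GlobHom (FQglob Q) C.toGlobSet where
  app n := Quot.lift (fun a => ev C φ a.1) (fun _ _ h => h C φ)
  app_src n x := by
    induction x using Quot.ind with | _ a => exact (ev_bsrc C φ a).symm
  app_tgt n x := by
    induction x using Quot.ind with | _ a => exact (ev_btgt C φ a).symm

theorem dinj {n} {x y : FQcells Q n}
    (h : ∀ (C : StarOmegaCat) (φ : Q ⟶ forgetStar.obj C),
      (down C φ).app n x = (down C φ).app n y) : x = y := by
  induction x using Quot.ind with | _ a =>
  induction y using Quot.ind with | _ b =>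
  exact Quot.sound (fun C φ => h C φ)

def fid (n : ℕ) : FQcells Q n → FQcells Q (n + 1) :=
  Quot.lift (fun a => Quot.mk _ ⟨T.tid n a.1, fun C φ => a.2 C φ⟩)
    (fun a b h => Quot.sound (fun C φ => congrArg (C.id' n) (h C φ)))

def finv (q n : ℕ) : FQcells Q n → FQcells Q n :=
  Quot.lift (fun a => Quot.mk _ ⟨T.tinv q n a.1, fun C φ => a.2 C φ⟩)
    (fun a b h => Quot.sound (fun C φ => congrArg (C.inv q n) (h C φ)))

noncomputable def rep {n} (x : FQcells Q n) : Tsub Q n := (Quot.exists_rep x).choose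

theorem rep_spec {n} (x : FQcells Q n) : Quot.mk _ (rep x) = x := (Quot.exists_rep x).choose_spec

theorem down_rep (C φ) {n} (x : FQcells Q n) : ev C φ (rep x).1 = (down C φ).app n x := by
  conv_rhs => rw [← rep_spec x]
  rfl


theorem comp_hyp (C : StarOmegaCat) (φ : Q ⟶ forgetStar.obj C) {p k : ℕ} {x' x : FQcells Q (p + (k + 1))}
    (h : (FQglob Q).srcIter (k+1) x' = (FQglob Q).tgtIter (k+1) x) :
    C.toGlobSet.srcIter (k+1) ((down C φ).app _ x')
      = C.toGlobSet.tgtIter (k+1) ((down C φ).app _ x) := by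
  have := congrArg ((down C φ).app p) h
  rwa [GlobHom.app_srcIter, GlobHom.app_tgtIter] at this

noncomputable def fcomp (p k : ℕ) (x' x : FQcells Q (p + (k + 1)))
    (h : (FQglob Q).srcIter (k+1) x' = (FQglob Q).tgtIter (k+1) x) : FQcells Q (p + (k + 1)) :=
  Quot.mk _ ⟨T.tcomp p k (rep x').1 (rep x).1, fun C φ =>
    ⟨(rep x').2 C φ, (rep x).2 C φ, by rw [down_rep, down_rep]; exact comp_hyp C φ h⟩⟩

theorem down_comp_eq (C φ) {p k : ℕ} {x' x : FQcells Q (p + (k + 1))}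
    (h : (FQglob Q).srcIter (k+1) x' = (FQglob Q).tgtIter (k+1) x)
    {c' c : C.toGlobSet.cells (p + (k + 1))}
    (hc' : (down C φ).app _ x' = c') (hc : (down C φ).app _ x = c)
    (h'' : C.toGlobSet.srcIter (k+1) c' = C.toGlobSet.tgtIter (k+1) c) :
    (down C φ).app _ (fcomp p k x' x h) = C.comp p k c' c h'' := by
  subst hc' hc
  show ev C φ (T.tcomp p k (rep x').1 (rep x).1) = _
  rw [ev_tcomp C φ (by rw [down_rep, down_rep]; exact comp_hyp C φ h)]
  exact comp_congr C.toStrictOmegaCat (down_rep C φ x') (down_rep C φ x) _ _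

theorem down_comp (C φ) {p k : ℕ} (x' x : FQcells Q (p + (k + 1)))
    (h : (FQglob Q).srcIter (k+1) x' = (FQglob Q).tgtIter (k+1) x) :
    (down C φ).app _ (fcomp p k x' x h)
      = C.comp p k ((down C φ).app _ x') ((down C φ).app _ x) (comp_hyp C φ h) :=
  down_comp_eq C φ h rfl rfl _

theorem down_fid (C φ) {n} (x : FQcells Q n) :
    (down C φ).app (n+1) (fid n x) = C.id' n ((down C φ).app n x) := by
  induction x using Quot.ind with | _ a => rfl

theorem down_finv (C φ) (q : ℕ) {n} (x : FQcells Q n) :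
    (down C φ).app n (finv q n x) = C.inv q n ((down C φ).app n x) := by
  induction x using Quot.ind with | _ a => rfl

theorem down_fsrc (C φ) {n} (x : FQcells Q (n+1)) :
    (down C φ).app n ((FQglob Q).src n x) = C.toGlobSet.src n ((down C φ).app (n+1) x) :=
  ((down C φ).app_src n x).symm

theorem down_ftgt (C φ) {n} (x : FQcells Q (n+1)) :
    (down C φ).app n ((FQglob Q).tgt n x) = C.toGlobSet.tgt n ((down C φ).app (n+1) x) :=
  ((down C φ).app_tgt n x).symm

theorem down_iterId (C φ) (k : ℕ) : ∀ {n} (x : (FQglob Q).cells n),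
    (down C φ).app (n+k) (iterId (FQglob Q).cells fid k x)
      = iterId C.toGlobSet.cells C.id' k ((down C φ).app n x) := by
  induction k with
  | zero => intro n x; rfl
  | succ k ih =>
    intro n x
    show (down C φ).app (n+k+1) (fid (n+k) (iterId (FQglob Q).cells fid k x)) = _
    rw [down_fid, ih]
    rfl

theorem down_cast (C φ) {m m' : ℕ} (he : m = m') (x : FQcells Q m) :
    (down C φ).app m' ((FQglob Q).castCell he x)
      = C.toGlobSet.castCell he ((down C φ).app m x) := by
  subst he; rfl


variable (Q) in
/-- The free fully involutive strict globular ω-category on `Q`. -/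
noncomputable def FQ : StarOmegaCat where
  toGlobSet := FQglob Q
  id' := fid
  id_src n x := by
    refine dinj (fun C φ => ?_)
    rw [down_fsrc, down_fid, C.id_src]
  id_tgt n x := by
    refine dinj (fun C φ => ?_)
    rw [down_ftgt, down_fid, C.id_tgt]
  comp := fcomp
  comp_src_zero p x' x h := by
    refine dinj (fun C φ => ?_)
    rw [down_fsrc, down_comp C φ, C.comp_src_zero, down_fsrc]
  comp_tgt_zero p x' x h := by
    refine dinj (fun C φ => ?_)
    rw [down_ftgt, down_comp C φ, C.comp_tgt_zero, down_ftgt]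
  comp_src_succ p k x' x h h' := by
    refine dinj (fun C φ => ?_)
    have hh : C.toGlobSet.srcIter (k+1) (C.toGlobSet.src (p+(k+1)) ((down C φ).app _ x'))
        = C.toGlobSet.tgtIter (k+1) (C.toGlobSet.src (p+(k+1)) ((down C φ).app _ x)) := by
      rw [← down_fsrc, ← down_fsrc]; exact comp_hyp C φ h'
    refine ((down_fsrc C φ _).trans ?_).trans
      (down_comp_eq C φ h' (down_fsrc C φ x') (down_fsrc C φ x) hh).symm
    exact (congrArg (C.toGlobSet.src (p+(k+1))) (down_comp C φ x' x h)).trans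
      (C.comp_src_succ p k _ _ (comp_hyp C φ h) hh)
  comp_tgt_succ p k x' x h h' := by
    refine dinj (fun C φ => ?_)
    have hh : C.toGlobSet.srcIter (k+1) (C.toGlobSet.tgt (p+(k+1)) ((down C φ).app _ x'))
        = C.toGlobSet.tgtIter (k+1) (C.toGlobSet.tgt (p+(k+1)) ((down C φ).app _ x)) := by
      rw [← down_ftgt, ← down_ftgt]; exact comp_hyp C φ h'
    refine ((down_ftgt C φ _).trans ?_).trans
      (down_comp_eq C φ h' (down_ftgt C φ x') (down_ftgt C φ x) hh).symm
    exact (congrArg (C.toGlobSet.tgt (p+(k+1))) (down_comp C φ x' x h)).trans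
      (C.comp_tgt_succ p k _ _ (comp_hyp C φ h) hh)
  comp_assoc p k z y x hzy hyx hl hr := by
    refine dinj (fun C φ => ?_)
    have hz := comp_hyp C φ hzy
    have hx := comp_hyp C φ hyx
    have hL : C.toGlobSet.srcIter (k+1)
          (C.comp p k ((down C φ).app _ z) ((down C φ).app _ y) hz)
        = C.toGlobSet.tgtIter (k+1) ((down C φ).app _ x) := by
      rw [← down_comp C φ _ _ hzy]; exact comp_hyp C φ hl
    have hR : C.toGlobSet.srcIter (k+1) ((down C φ).app _ z)
        = C.toGlobSet.tgtIter (k+1)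
          (C.comp p k ((down C φ).app _ y) ((down C φ).app _ x) hx) := by
      rw [← down_comp C φ _ _ hyx]; exact comp_hyp C φ hr
    rw [down_comp_eq C φ hl (down_comp C φ z y hzy) rfl hL,
        down_comp_eq C φ hr rfl (down_comp C φ y x hyx) hR]
    exact C.comp_assoc p k _ _ _ hz hx hL hR
  comp_unit_left p k x h := by
    refine dinj (fun C φ => ?_)
    have hid : (down C φ).app _ (iterId (FQglob Q).cells fid (k+1) ((FQglob Q).tgtIter (k+1) x))
        = iterId C.toGlobSet.cells C.id' (k+1)
            (C.toGlobSet.tgtIter (k+1) ((down C φ).app _ x)) := by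
      rw [down_iterId, GlobHom.app_tgtIter]
    have hh := comp_hyp C φ h
    rw [hid] at hh
    rw [down_comp_eq C φ h hid rfl hh]
    exact C.comp_unit_left p k _ hh
  comp_unit_right p k x h := by
    refine dinj (fun C φ => ?_)
    have hid : (down C φ).app _ (iterId (FQglob Q).cells fid (k+1) ((FQglob Q).srcIter (k+1) x))
        = iterId C.toGlobSet.cells C.id' (k+1)
            (C.toGlobSet.srcIter (k+1) ((down C φ).app _ x)) := by
      rw [down_iterId, GlobHom.app_srcIter]
    have hh := comp_hyp C φ h
    rw [hid] at hh
    rw [down_comp_eq C φ h rfl hid hh]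
    exact C.comp_unit_right p k _ hh
  id_comp' p k x' x h h' := by
    refine dinj (fun C φ => ?_)
    have hh0 := comp_hyp C φ h'
    have hh : C.toGlobSet.srcIter (k+2) (C.id' (p+(k+1)) ((down C φ).app _ x'))
        = C.toGlobSet.tgtIter (k+2) (C.id' (p+(k+1)) ((down C φ).app _ x)) :=
      ((congrArg (C.toGlobSet.srcIter (k+2)) (down_fid C φ x')).symm.trans hh0).trans
        (congrArg (C.toGlobSet.tgtIter (k+2)) (down_fid C φ x))
    refine ((down_fid C φ _).trans ?_).trans
      (down_comp_eq C φ h' (down_fid C φ x') (down_fid C φ x) hh).symm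
    exact (congrArg (C.id' (p+(k+1))) (down_comp C φ x' x h)).trans
      (C.id_comp' p k _ _ (comp_hyp C φ h) hh)
  exchange q d k j he y' y x' x h₁ h₂ h₃ h₄ h₅ h₆ := by
    refine dinj (fun C φ => ?_)
    have c₁ := comp_hyp C φ h₁
    have c₂ := comp_hyp C φ h₂
    have dgy : (down C φ).app _ ((FQglob Q).castCell he (fcomp (q+(d+1)) k y' y h₁))
        = C.toGlobSet.castCell he
            (C.comp (q+(d+1)) k ((down C φ).app _ y') ((down C φ).app _ y) c₁) := by
      rw [down_cast, down_comp C φ]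
    have dgx : (down C φ).app _ ((FQglob Q).castCell he (fcomp (q+(d+1)) k x' x h₂))
        = C.toGlobSet.castCell he
            (C.comp (q+(d+1)) k ((down C φ).app _ x') ((down C φ).app _ x) c₂) := by
      rw [down_cast, down_comp C φ]
    have c₃ := comp_hyp C φ h₃
    rw [dgy, dgx] at c₃
    have c₄ := comp_hyp C φ h₄
    rw [down_cast, down_cast] at c₄
    have c₅ := comp_hyp C φ h₅
    rw [down_cast, down_cast] at c₅
    have dy2 : (down C φ).app _ ((FQglob Q).castCell he.symm
          (fcomp q j ((FQglob Q).castCell he y') ((FQglob Q).castCell he x') h₄))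
        = C.toGlobSet.castCell he.symm (C.comp q j
            (C.toGlobSet.castCell he ((down C φ).app _ y'))
            (C.toGlobSet.castCell he ((down C φ).app _ x')) c₄) := by
      rw [down_cast,
        down_comp_eq C φ h₄ (down_cast C φ he y') (down_cast C φ he x') c₄]
    have dx2 : (down C φ).app _ ((FQglob Q).castCell he.symm
          (fcomp q j ((FQglob Q).castCell he y) ((FQglob Q).castCell he x) h₅))
        = C.toGlobSet.castCell he.symm (C.comp q j
            (C.toGlobSet.castCell he ((down C φ).app _ y))
            (C.toGlobSet.castCell he ((down C φ).app _ x)) c₅) := by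
      rw [down_cast,
        down_comp_eq C φ h₅ (down_cast C φ he y) (down_cast C φ he x) c₅]
    have c₆ := comp_hyp C φ h₆
    rw [dy2, dx2] at c₆
    rw [down_comp_eq C φ h₃ dgy dgx c₃, down_cast,
        down_comp_eq C φ h₆ dy2 dx2 c₆]
    exact C.exchange q d k j he _ _ _ _ c₁ c₂ c₃ c₄ c₅ c₆
  inv := finv
  inv_src_self q x := by
    refine dinj (fun C φ => ?_)
    rw [down_finv, down_fsrc, down_ftgt, down_finv, C.inv_src_self]
  inv_tgt_self q x := by
    refine dinj (fun C φ => ?_)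
    rw [down_finv, down_ftgt, down_fsrc, down_finv, C.inv_tgt_self]
  inv_src_ne q p hne x := by
    refine dinj (fun C φ => ?_)
    rw [down_finv, down_fsrc, down_fsrc, down_finv, C.inv_src_ne q p hne]
  inv_tgt_ne q p hne x := by
    refine dinj (fun C φ => ?_)
    rw [down_finv, down_ftgt, down_ftgt, down_finv, C.inv_tgt_ne q p hne]
  inv_comp_self p k x' x h h' := by
    refine dinj (fun C φ => ?_)
    have hh := comp_hyp C φ h'
    rw [down_finv, down_finv] at hh
    rw [down_finv, down_comp C φ, C.inv_comp_self p k _ _ (comp_hyp C φ h) hh,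
        down_comp_eq C φ h' (down_finv C φ p x) (down_finv C φ p x') hh]
  inv_comp_ne q p k hne x' x h h' := by
    refine dinj (fun C φ => ?_)
    have hh := comp_hyp C φ h'
    rw [down_finv, down_finv] at hh
    rw [down_finv, down_comp C φ, C.inv_comp_ne q p k hne _ _ (comp_hyp C φ h) hh,
        down_comp_eq C φ h' (down_finv C φ q x') (down_finv C φ q x) hh]
  inv_id q n x := by
    refine dinj (fun C φ => ?_)
    rw [down_finv, down_fid, C.inv_id, down_fid, down_finv]
  inv_inv q n x := by
    refine dinj (fun C φ => ?_)
    rw [down_finv, down_finv, C.inv_inv]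
  inv_comm q p n x := by
    refine dinj (fun C φ => ?_)
    rw [down_finv, down_finv, down_finv, down_finv, C.inv_comm]
  inv_ground q n hle x := by
    refine dinj (fun C φ => ?_)
    rw [down_finv, C.inv_ground q n hle]


variable (Q) in
/-- The unit of the free/forgetful adjunction. -/
def eta : Q ⟶ forgetStar.obj (FQ Q) where
  app n x := Quot.mk _ ⟨T.gen n x, fun _ _ => trivial⟩
  app_src n x := rfl
  app_tgt n x := rfl

/-- The canonical involutive ω-functor out of the free object. -/
noncomputable def hat : FQ Q ⟶ C where
  toF :=
    { toGlobHom := down C φ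
      map_id := fun n x => down_fid C φ x
      map_comp := fun p k x' x h _ => down_comp C φ x' x h }
  map_inv := fun q n x => down_finv C φ q x

theorem hat_tri : eta Q ≫ forgetStar.map (hat C φ) = φ :=
  GlobHom.hext fun _ _ => rfl

theorem psi_app (ψ : FQ Q ⟶ C) (hψ : eta Q ≫ forgetStar.map ψ = φ) :
    ∀ {n} (t : T Q n) (wf : WFree Q n t),
      ψ.toF.toGlobHom.app n (Quot.mk _ ⟨t, wf⟩) = ev C φ t := by
  intro n t
  induction t with
  | gen n x =>
    intro wf
    exact GlobHom.congr_app hψ n x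
  | tid n t ih =>
    intro wf
    have wf' : WFree Q n t := fun C' φ' => wf C' φ'
    calc ψ.toF.toGlobHom.app (n+1) (Quot.mk _ ⟨T.tid n t, wf⟩)
        = ψ.toF.toGlobHom.app (n+1) ((FQ Q).id' n (Quot.mk _ ⟨t, wf'⟩)) := rfl
      _ = C.id' n (ψ.toF.toGlobHom.app n (Quot.mk _ ⟨t, wf'⟩)) := ψ.toF.map_id n _
      _ = C.id' n (ev C φ t) := congrArg _ (ih wf')
  | tinv i n t ih =>
    intro wf
    have wf' : WFree Q n t := fun C' φ' => wf C' φ'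
    calc ψ.toF.toGlobHom.app n (Quot.mk _ ⟨T.tinv i n t, wf⟩)
        = ψ.toF.toGlobHom.app n ((FQ Q).inv i n (Quot.mk _ ⟨t, wf'⟩)) := rfl
      _ = C.inv i n (ψ.toF.toGlobHom.app n (Quot.mk _ ⟨t, wf'⟩)) := ψ.map_inv i n _
      _ = C.inv i n (ev C φ t) := congrArg _ (ih wf')
  | tcomp p k x' x ih1 ih2 =>
    intro wf
    have wf1 : WFree Q _ x' := fun C' φ' => (wf C' φ').1
    have wf2 : WFree Q _ x := fun C' φ' => (wf C' φ').2.1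
    have hcomp : (FQglob Q).srcIter (k+1) (Quot.mk _ (⟨x', wf1⟩ : Tsub Q _))
        = (FQglob Q).tgtIter (k+1) (Quot.mk _ (⟨x, wf2⟩ : Tsub Q _)) := by
      refine dinj (fun C' φ' => ?_)
      rw [GlobHom.app_srcIter, GlobHom.app_tgtIter]
      exact (wf C' φ').2.2
    have hmk : (Quot.mk _ (⟨T.tcomp p k x' x, wf⟩ : Tsub Q _) : FQcells Q (p+(k+1)))
        = fcomp p k (Quot.mk _ ⟨x', wf1⟩) (Quot.mk _ ⟨x, wf2⟩) hcomp := by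
      refine dinj (fun C' φ' => ?_)
      rw [down_comp C' φ']
      exact ev_tcomp C' φ' ((wf C' φ').2.2)
    have hC : C.toGlobSet.srcIter (k+1) (ψ.toF.toGlobHom.app _ (Quot.mk _ ⟨x', wf1⟩))
        = C.toGlobSet.tgtIter (k+1) (ψ.toF.toGlobHom.app _ (Quot.mk _ ⟨x, wf2⟩)) := by
      rw [ih1 wf1, ih2 wf2]
      exact (wf C φ).2.2
    calc ψ.toF.toGlobHom.app _ (Quot.mk _ ⟨T.tcomp p k x' x, wf⟩)
        = ψ.toF.toGlobHom.app _ (fcomp p k (Quot.mk _ ⟨x', wf1⟩) (Quot.mk _ ⟨x, wf2⟩) hcomp) :=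
          congrArg _ hmk
      _ = C.comp p k (ψ.toF.toGlobHom.app _ (Quot.mk _ ⟨x', wf1⟩))
            (ψ.toF.toGlobHom.app _ (Quot.mk _ ⟨x, wf2⟩)) hC := ψ.toF.map_comp p k _ _ hcomp hC
      _ = C.comp p k (ev C φ x') (ev C φ x) ((wf C φ).2.2) :=
          comp_congr C.toStrictOmegaCat (ih1 wf1) (ih2 wf2) hC _
      _ = ev C φ (T.tcomp p k x' x) := (ev_tcomp C φ ((wf C φ).2.2)).symm

theorem hat_unique (ψ : FQ Q ⟶ C) (hψ : eta Q ≫ forgetStar.map ψ = φ) : ψ = hat C φ := by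
  refine StarFunctor.hext (StrictFunctor.hext (GlobHom.hext fun n x => ?_))
  induction x using Quot.ind with | _ a =>
  exact psi_app C φ ψ hψ a.1 a.2

/-- The free involutive ω-category functor. -/
noncomputable def Ffun : GlobSet ⥤ StarOmegaCat where
  obj := FQ
  map {X Y} ρ := hat (FQ Y) (ρ ≫ eta Y)
  map_id X := by
    refine (hat_unique (FQ X) (𝟙 X ≫ eta X) (𝟙 (FQ X)) ?_).symm
    simp
  map_comp {X Y Z} ρ σ := by
    refine (hat_unique (FQ Z) ((ρ ≫ σ) ≫ eta Z) _ ?_).symm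
    rw [Functor.map_comp, ← Category.assoc, hat_tri, Category.assoc, hat_tri, Category.assoc]

end FreeStar

/-- The forgetful functor `U* : Cf* ⥤ Qf` from strict fully involutive
globular ω-categories to globular ω-sets admits a left adjoint `F*`, the free strict
involutive globular ω-category functor: for every globular ω-set `Q` there is a morphism
of globular ω-sets `η*_Q : Q ⟶ U*(F*(Q))` such that for every morphism of globular
ω-sets `φ : Q ⟶ U*(Ĉ)` into the underlying globular ω-set of a strict fully involutive
globular ω-category `Ĉ` there exists a unique involutive ω-functor `φ̂ : F*(Q) ⟶ Ĉ`
with `φ = U*(φ̂) ∘ η*_Q`. -/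
theorem free_involutive_strict_omega_category :
    ∃ (F : GlobSet ⥤ StarOmegaCat) (η : ∀ Q : GlobSet, Q ⟶ forgetStar.obj (F.obj Q)),
      ∀ (Q : GlobSet) (C : StarOmegaCat) (φ : Q ⟶ forgetStar.obj C),
        ∃! φhat : F.obj Q ⟶ C, η Q ≫ forgetStar.map φhat = φ :=
  ⟨FreeStar.Ffun, fun Q => FreeStar.eta Q, fun Q C φ =>
    ⟨FreeStar.hat C φ, FreeStar.hat_tri C φ, fun ψ hψ => FreeStar.hat_unique C φ ψ hψ⟩⟩
end
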